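/- arXiv:1203.3836 — 2 statements merged into one kernel-verified Lean document; each statement's English description precedes it below -/
import Mathlib

section
/- Let (Γ, α, θ, λ) be a 4-independent 1-skeleton in ℝ^n. Then every 2-valent subskeleton of (Γ, α, θ, λ) has trivial normal holonomy. -/
open SimpleGraph

universe u u' v

variable {V : Type u}

/-- The type of connections on a graph: for each oriented edge (given by an adjacency proof),
a bijection between the neighbor set of the initial vertex and that of the terminal vertex. -/
abbrev GraphConn {V : Type u} (G : SimpleGraph V) : Type u :=
  ∀ ⦃p q : V⦄, G.Adj p q → (↥(G.neighborSet p) ≃ ↥(G.neighborSet q))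

/-- The type of compatibility systems: for each oriented edge, a real-valued function on the
oriented edges at the initial vertex. -/
abbrev CompatSys {V : Type u} (G : SimpleGraph V) : Type u :=
  ∀ ⦃p q : V⦄, G.Adj p q → (↥(G.neighborSet p) → ℝ)

/-- The type of (generalized) axial functions with values in `W`. -/
abbrev AxialFn {V : Type u} (G : SimpleGraph V) (W : Type v) : Type (max u v) :=
  ∀ ⦃p q : V⦄, G.Adj p q → W

/-- The `G`-adjacency underlying an element of a neighbor set. -/
def nadj {G : SimpleGraph V} {p : V} (e : ↥(G.neighborSet p)) : G.Adj p ↑e := e.2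

/-- `θ` is a connection: `θ_e e = ē` and `θ_{ē} = θ_e⁻¹`. -/
def IsConnection (G : SimpleGraph V) (θ : GraphConn G) : Prop :=
  (∀ ⦃p q : V⦄ (h : G.Adj p q), θ h ⟨q, h⟩ = ⟨p, h.symm⟩) ∧
  (∀ ⦃p q : V⦄ (h : G.Adj p q), θ h.symm = (θ h).symm)

/-- `lam` is a compatibility system for `(G, θ)`: positive values with
`λ_{ē}(θ_e e') = 1 / λ_e(e')`. -/
def IsCompatSystem (G : SimpleGraph V) (θ : GraphConn G) (lam : CompatSys G) : Prop :=
  (∀ ⦃p q : V⦄ (h : G.Adj p q) (e : ↥(G.neighborSet p)), 0 < lam h e) ∧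
  (∀ ⦃p q : V⦄ (h : G.Adj p q) (e : ↥(G.neighborSet p)),
      lam h.symm (θ h e) = (lam h e)⁻¹)

section Axial

variable {W : Type v} [AddCommGroup W] [Module ℝ W]

/-- `α` is a generalized axial function for `(G, θ, λ)`: (gA1) `α(e) = -m_e • α(ē)` for some
`m_e > 0`, and (gA2) `α(e') - λ_e(e') • α(θ_e(e'))` is a scalar multiple of `α(e)` for `e' ≠ e`
at the initial vertex of `e`. -/
def IsGenAxial (G : SimpleGraph V) (θ : GraphConn G) (lam : CompatSys G)
    (α : AxialFn G W) : Prop :=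
  (∀ ⦃p q : V⦄ (h : G.Adj p q), ∃ m : ℝ, 0 < m ∧ α h = -(m • α h.symm)) ∧
  (∀ ⦃p q : V⦄ (h : G.Adj p q) (e : ↥(G.neighborSet p)), (↑e : V) ≠ q →
      ∃ c : ℝ, α (nadj e) - lam h e • α (nadj (θ h e)) = c • α h)

/-- The quadruple `(G, θ, λ, α)` is a generalized 1-skeleton (on a connected graph). -/
structure IsGenSkeleton (G : SimpleGraph V) (θ : GraphConn G) (lam : CompatSys G)
    (α : AxialFn G W) : Prop where
  connected : G.Connected
  conn : IsConnection G θ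
  compat : IsCompatSystem G θ lam
  axial : IsGenAxial G θ lam α

/-- The extra axioms making a generalized 1-skeleton an honest 1-skeleton:
`α(ē) = -α(e)` and pairwise linear independence at each vertex. -/
def IsSkeletal (G : SimpleGraph V) (α : AxialFn G W) : Prop :=
  (∀ ⦃p q : V⦄ (h : G.Adj p q), α h.symm = -α h) ∧
  (∀ (p : V) (e e' : ↥(G.neighborSet p)), e ≠ e' →
      LinearIndependent ℝ ![α (nadj e), α (nadj e')])

/-- `(G, θ, λ, α)` is a 1-skeleton. -/
def IsOneSkeleton (G : SimpleGraph V) (θ : GraphConn G) (lam : CompatSys G)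
    (α : AxialFn G W) : Prop :=
  IsGenSkeleton G θ lam α ∧ IsSkeletal G α

/-- `G` is `d`-valent. -/
def Valency (G : SimpleGraph V) (d : ℕ) : Prop :=
  ∀ p : V, (G.neighborSet p).ncard = d

/-- `α` is `k`-independent. -/
def kIndep (G : SimpleGraph V) (α : AxialFn G W) (k : ℕ) : Prop :=
  ∀ (p : V) (s : Finset ↥(G.neighborSet p)), s.card = k →
    LinearIndependent ℝ (fun e : ↥(↑s : Set ↥(G.neighborSet p)) => α (nadj (e : ↥(G.neighborSet p))))

/-- `α` is effective: the axial vectors at each vertex span the target space. -/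
def EffectiveAxial (G : SimpleGraph V) (α : AxialFn G W) : Prop :=
  ∀ p : V, Submodule.span ℝ (Set.range fun e : ↥(G.neighborSet p) => α (nadj e)) = ⊤

/-- A covector is generic if it pairs nonzero with each axial vector. -/
def GenericCovec (G : SimpleGraph V) (α : AxialFn G W) (ξ : W →ₗ[ℝ] ℝ) : Prop :=
  ∀ ⦃p q : V⦄ (h : G.Adj p q), ξ (α h) ≠ 0

/-- The directed-edge relation induced by a covector. -/
def dirRel (G : SimpleGraph V) (α : AxialFn G W) (ξ : W →ₗ[ℝ] ℝ) : V → V → Prop :=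
  fun p q => ∃ h : G.Adj p q, 0 < ξ (α h)

/-- A generic covector is polarizing if the induced orientation has no directed cycles. -/
def PolarizingCovec (G : SimpleGraph V) (α : AxialFn G W) (ξ : W →ₗ[ℝ] ℝ) : Prop :=
  GenericCovec G α ξ ∧ ∀ p : V, ¬ Relation.TransGen (dirRel G α ξ) p p

/-- A Morse function compatible with a (polarizing) covector. -/
def MorseCompat (G : SimpleGraph V) (α : AxialFn G W) (ξ : W →ₗ[ℝ] ℝ) (φ : V → ℝ) : Prop :=
  Function.Injective φ ∧ ∀ ⦃p q : V⦄ (h : G.Adj p q), 0 < ξ (α h) → φ p < φ q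

/-- An embedding of a 1-skeleton. -/
def IsSkelEmbedding (G : SimpleGraph V) (α : AxialFn G W) (f : V → W) : Prop :=
  ∀ ⦃p q : V⦄ (h : G.Adj p q), ∃ c : ℝ, 0 < c ∧ f q - f p = c • α h

end Axial
section Sub

variable {W : Type v} [AddCommGroup W] [Module ℝ W]

/-- Transport of oriented edges along a walk, via the connection. -/
def transport {G : SimpleGraph V} (θ : GraphConn G) :
    ∀ {p q : V}, G.Walk p q → ↥(G.neighborSet p) → ↥(G.neighborSet q)
  | _, _, SimpleGraph.Walk.nil, e => e
  | _, _, SimpleGraph.Walk.cons h w, e => transport θ w (θ h e)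

/-- The local path-connection number of an oriented edge along a walk. -/
def transNum {G : SimpleGraph V} (θ : GraphConn G) (lam : CompatSys G) :
    ∀ {p q : V}, G.Walk p q → ↥(G.neighborSet p) → ℝ
  | _, _, SimpleGraph.Walk.nil, _ => 1
  | _, _, SimpleGraph.Walk.cons h w, e => lam h e * transNum θ lam w (θ h e)

/-- A walk of `G` lies in the subgraph `H` if all its darts are edges of `H`. -/
def WalkIn {G : SimpleGraph V} (H : G.Subgraph) {p q : V} (w : G.Walk p q) : Prop :=
  ∀ d ∈ w.darts, H.Adj d.toProd.1 d.toProd.2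

/-- A subskeleton: a connected regular totally geodesic subgraph. -/
structure IsSubskeleton {G : SimpleGraph V} (θ : GraphConn G) (H : G.Subgraph) : Prop where
  connected : H.Connected
  regular : ∃ k : ℕ, ∀ p ∈ H.verts, (H.neighborSet p).ncard = k
  geodesic : ∀ ⦃p q : V⦄ (h : H.Adj p q) (e : ↥(G.neighborSet p)),
      H.Adj p ↑e → H.Adj q ↑(θ (H.adj_sub h) e)

/-- The subskeleton `H` has trivial normal holonomy. -/
def TrivialNormalHolonomy {G : SimpleGraph V} (θ : GraphConn G) (H : G.Subgraph) : Prop :=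
  ∀ (p : V) (w : G.Walk p p), WalkIn H w →
    ∀ e : ↥(G.neighborSet p), ¬ H.Adj p ↑e → transport θ w e = e

/-- The subskeleton `H` is level. -/
def LevelSub {G : SimpleGraph V} (θ : GraphConn G) (lam : CompatSys G)
    (H : G.Subgraph) : Prop :=
  ∀ (p : V) (w : G.Walk p p), WalkIn H w →
    ∀ e : ↥(G.neighborSet p), ¬ H.Adj p ↑e → transport θ w e = e →
      transNum θ lam w e = 1

/-- The index of a vertex of a subgraph with respect to a covector. -/
noncomputable def subIndex {G : SimpleGraph V} (α : AxialFn G W) (ξ : W →ₗ[ℝ] ℝ)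
    (H : G.Subgraph) (p : V) : ℕ :=
  {q : V | ∃ h : H.Adj p q, ξ (α (H.adj_sub h)) < 0}.ncard

/-- `b₀` of a subgraph with respect to a covector: the number of index-zero vertices. -/
noncomputable def subB0 {G : SimpleGraph V} (α : AxialFn G W) (ξ : W →ₗ[ℝ] ℝ)
    (H : G.Subgraph) : ℕ :=
  {p : V | p ∈ H.verts ∧ subIndex α ξ H p = 0}.ncard

/-- A 2-face: a 2-valent subskeleton with `b₀ = 1` (computed with the covector `ξ`). -/
def IsTwoFace {G : SimpleGraph V} (θ : GraphConn G) (α : AxialFn G W) (ξ : W →ₗ[ℝ] ℝ)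
    (H : G.Subgraph) : Prop :=
  IsSubskeleton θ H ∧ (∀ p ∈ H.verts, (H.neighborSet p).ncard = 2) ∧ subB0 α ξ H = 1

/-- Enough 2-faces: any two distinct oriented edges at a vertex lie on a unique 2-face. -/
def EnoughTwoFaces (G : SimpleGraph V) (θ : GraphConn G) (α : AxialFn G W)
    (ξ : W →ₗ[ℝ] ℝ) : Prop :=
  ∀ (p : V) (e e' : ↥(G.neighborSet p)), e ≠ e' →
    ∃! H : G.Subgraph, IsTwoFace θ α ξ H ∧ H.Adj p ↑e ∧ H.Adj p ↑e'

/-- A 1-skeleton is reducible if it admits a polarizing covector and has enough 2-faces. -/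
def ReducibleSkel (G : SimpleGraph V) (θ : GraphConn G) (α : AxialFn G W) : Prop :=
  ∃ ξ : W →ₗ[ℝ] ℝ, PolarizingCovec G α ξ ∧ EnoughTwoFaces G θ α ξ

/-- A total lift: an effective generalized axial function `A` for the same `(G, θ, λ)` with
values in `ℝ^d` (`d` the valency), together with a surjective linear map `L` with `α = L ∘ A`. -/
def HasTotalLift (G : SimpleGraph V) (θ : GraphConn G) (lam : CompatSys G)
    (α : AxialFn G W) (d : ℕ) : Prop :=
  ∃ A : AxialFn G (Fin d → ℝ),
    IsGenAxial G θ lam A ∧ EffectiveAxial G A ∧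
    ∃ L : (Fin d → ℝ) →ₗ[ℝ] W, Function.Surjective L ∧
      ∀ ⦃p q : V⦄ (h : G.Adj p q), α h = L (A h)

/-- Equivalence of generalized 1-skeleta on the same graph-connection pair. -/
def EquivGenSkel (G : SimpleGraph V) (θ : GraphConn G) (lam lam' : CompatSys G)
    (α α' : AxialFn G W) : Prop :=
  ∃ κ : ∀ ⦃p q : V⦄, G.Adj p q → ℝ,
    (∀ ⦃p q : V⦄ (h : G.Adj p q), 0 < κ h) ∧
    (∀ ⦃p q : V⦄ (h : G.Adj p q), α h = κ h • α' h) ∧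
    (∀ ⦃p q : V⦄ (h : G.Adj p q) (e : ↥(G.neighborSet p)),
        lam h e = (κ (nadj e) / κ (nadj (θ h e))) * lam' h e)

/-- The graph whose edges are the edges of `G` with axial vector in the subspace `Hs`. -/
def sliceGraph (G : SimpleGraph V) (α : AxialFn G W) (Hs : Submodule ℝ W) :
    SimpleGraph V where
  Adj p q := ∃ h : G.Adj p q, α h ∈ Hs ∧ α h.symm ∈ Hs
  symm := by
    constructor
    intro p q ⟨h, h1, h2⟩
    exact ⟨h.symm, h2, h1⟩
  loopless := by
    constructor
    intro p ⟨h, _⟩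
    exact G.ne_of_adj h rfl

/-- The connected component of `v` in the slice graph, as a subgraph of `G`. -/
def sliceComponent (G : SimpleGraph V) (α : AxialFn G W) (Hs : Submodule ℝ W) (v : V) :
    G.Subgraph where
  verts := {w : V | (sliceGraph G α Hs).Reachable v w}
  Adj p q := (sliceGraph G α Hs).Adj p q ∧ (sliceGraph G α Hs).Reachable v p ∧
    (sliceGraph G α Hs).Reachable v q
  adj_sub := fun h => h.1.1
  edge_vert := fun h => h.2.1
  symm := ⟨fun p q h => ⟨h.1.symm, h.2.2, h.2.1⟩⟩

/-- Pointedness of a subgraph (e.g. a slice): for every covector nonvanishing on its edges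
there is a unique source vertex. -/
def SubPointed {G : SimpleGraph V} (α : AxialFn G W) (H : G.Subgraph) : Prop :=
  ∀ ξ : W →ₗ[ℝ] ℝ, (∀ ⦃p q : V⦄ (h : H.Adj p q), ξ (α (H.adj_sub h)) ≠ 0) →
    ∃! p : V, p ∈ H.verts ∧ ∀ ⦃q : V⦄ (h : H.Adj p q), 0 < ξ (α (H.adj_sub h))

/-- Pointedness of the whole skeleton: for every generic covector there is a unique source. -/
def PointedSkel (G : SimpleGraph V) (α : AxialFn G W) : Prop :=
  ∀ ξ : W →ₗ[ℝ] ℝ, GenericCovec G α ξ →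
    ∃! p : V, ∀ ⦃q : V⦄ (h : G.Adj p q), 0 < ξ (α h)

/-- A 3-independent 1-skeleton is noncyclic if it admits a polarizing covector and every
2-slice is pointed. -/
def Noncyclic (G : SimpleGraph V) (α : AxialFn G W) : Prop :=
  kIndep G α 3 ∧ (∃ ξ : W →ₗ[ℝ] ℝ, PolarizingCovec G α ξ) ∧
  ∀ (Hs : Submodule ℝ W), Module.finrank ℝ ↥Hs = 2 → ∀ v : V,
    SubPointed α (sliceComponent G α Hs v)

/-- A `d`-valent `d`-independent 1-skeleton is toral if every slice is pointed. -/
def Toral (G : SimpleGraph V) (α : AxialFn G W) : Prop :=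
  ∀ (Hs : Submodule ℝ W) (v : V), SubPointed α (sliceComponent G α Hs v)

end Sub
section CrossSection

variable {Vc : Type u'} {W : Type v} [AddCommGroup W] [Module ℝ W]

/-- Specification of the *down* `c`-cross-section of a reducible 1-skeleton `(G, θ, λ, α)`
with polarizing covector `ξ`, compatible Morse function `φ`, and regular value `c`.
`νm` identifies the vertices of the cross-section graph `Gc` with the oriented edges of `G`
at `c`-level; `face` assigns to each oriented edge of `Gc` the corresponding 2-face of `G`
at `c`-level; `θc`, `λc`, `αc` are the down connection, down compatibility system and down
axial function, characterized by normal transport along lower paths. -/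
structure IsDownCrossSection (G : SimpleGraph V) (θ : GraphConn G) (lam : CompatSys G)
    (α : AxialFn G W) (ξ : W →ₗ[ℝ] ℝ) (φ : V → ℝ) (c : ℝ)
    (Gc : SimpleGraph Vc) (νm : Vc → V × V) (θc : GraphConn Gc) (lamc : CompatSys Gc)
    (αc : AxialFn Gc ↥(LinearMap.ker ξ))
    (face : ∀ ⦃x y : Vc⦄, Gc.Adj x y → G.Subgraph) : Prop where
  nu_inj : Function.Injective νm
  nu_level : ∀ x : Vc, ∃ _ : G.Adj (νm x).1 (νm x).2, φ (νm x).1 < c ∧ c < φ (νm x).2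
  nu_surj : ∀ ⦃p q : V⦄, G.Adj p q → φ p < c → c < φ q → ∃ x : Vc, νm x = (p, q)
  conn_c : IsConnection Gc θc
  compat_c : IsCompatSystem Gc θc lamc
  face_two : ∀ ⦃x y : Vc⦄ (h : Gc.Adj x y), IsTwoFace θ α ξ (face h)
  face_symm : ∀ ⦃x y : Vc⦄ (h : Gc.Adj x y), face h.symm = face h
  face_init : ∀ ⦃x y : Vc⦄ (h : Gc.Adj x y), (face h).Adj (νm x).1 (νm x).2
  face_inj : ∀ ⦃x y y' : Vc⦄ (h : Gc.Adj x y) (h' : Gc.Adj x y'), face h = face h' → y = y'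
  face_surj : ∀ Q : G.Subgraph, IsTwoFace θ α ξ Q →
      ∀ ⦃p q : V⦄, Q.Adj p q → φ p < c → c < φ q →
        ∃ (x y : Vc) (h : Gc.Adj x y), νm x = (p, q) ∧ face h = Q
  conn_spec : ∀ ⦃x y : Vc⦄ (h : Gc.Adj x y) (x' : ↥(Gc.neighborSet x)), (↑x' : Vc) ≠ y →
      ∀ e : ↥(G.neighborSet (νm x).1),
        (face (nadj x')).Adj (νm x).1 ↑e → (↑e : V) ≠ (νm x).2 →
      ∀ e' : ↥(G.neighborSet (νm y).1),
        (face (nadj (θc h x'))).Adj (νm y).1 ↑e' → (↑e' : V) ≠ (νm y).2 →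
      ∀ (wlk : G.Walk (νm x).1 (νm y).1), WalkIn (face h) wlk →
        (∀ z ∈ wlk.support, φ z < c) →
        transport θ wlk e = e'
  lam_spec : ∀ ⦃x y : Vc⦄ (h : Gc.Adj x y) (x' : ↥(Gc.neighborSet x)), (↑x' : Vc) ≠ y →
      ∀ e : ↥(G.neighborSet (νm x).1),
        (face (nadj x')).Adj (νm x).1 ↑e → (↑e : V) ≠ (νm x).2 →
      ∀ (wlk : G.Walk (νm x).1 (νm y).1), WalkIn (face h) wlk →
        (∀ z ∈ wlk.support, φ z < c) →
        transNum θ lam wlk e = lamc h x'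
  alpha_spec : ∀ ⦃x y : Vc⦄ (h : Gc.Adj x y) (hpq : G.Adj (νm x).1 (νm x).2)
      (e : ↥(G.neighborSet (νm x).1)),
      (face h).Adj (νm x).1 ↑e → (↑e : V) ≠ (νm x).2 →
      (↑(αc h) : W) = α (nadj e) - (ξ (α (nadj e)) / ξ (α hpq)) • α hpq

/-- Specification of the *up* `c`-cross-section; as `IsDownCrossSection`, but using normal
transport along upper paths and the up axial function. -/
structure IsUpCrossSection (G : SimpleGraph V) (θ : GraphConn G) (lam : CompatSys G)
    (α : AxialFn G W) (ξ : W →ₗ[ℝ] ℝ) (φ : V → ℝ) (c : ℝ)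
    (Gc : SimpleGraph Vc) (νm : Vc → V × V) (θc : GraphConn Gc) (lamc : CompatSys Gc)
    (αc : AxialFn Gc ↥(LinearMap.ker ξ))
    (face : ∀ ⦃x y : Vc⦄, Gc.Adj x y → G.Subgraph) : Prop where
  nu_inj : Function.Injective νm
  nu_level : ∀ x : Vc, ∃ _ : G.Adj (νm x).1 (νm x).2, φ (νm x).1 < c ∧ c < φ (νm x).2
  nu_surj : ∀ ⦃p q : V⦄, G.Adj p q → φ p < c → c < φ q → ∃ x : Vc, νm x = (p, q)
  conn_c : IsConnection Gc θc
  compat_c : IsCompatSystem Gc θc lamc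
  face_two : ∀ ⦃x y : Vc⦄ (h : Gc.Adj x y), IsTwoFace θ α ξ (face h)
  face_symm : ∀ ⦃x y : Vc⦄ (h : Gc.Adj x y), face h.symm = face h
  face_init : ∀ ⦃x y : Vc⦄ (h : Gc.Adj x y), (face h).Adj (νm x).1 (νm x).2
  face_inj : ∀ ⦃x y y' : Vc⦄ (h : Gc.Adj x y) (h' : Gc.Adj x y'), face h = face h' → y = y'
  face_surj : ∀ Q : G.Subgraph, IsTwoFace θ α ξ Q →
      ∀ ⦃p q : V⦄, Q.Adj p q → φ p < c → c < φ q →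
        ∃ (x y : Vc) (h : Gc.Adj x y), νm x = (p, q) ∧ face h = Q
  conn_spec : ∀ ⦃x y : Vc⦄ (h : Gc.Adj x y) (x' : ↥(Gc.neighborSet x)), (↑x' : Vc) ≠ y →
      ∀ e : ↥(G.neighborSet (νm x).2),
        (face (nadj x')).Adj (νm x).2 ↑e → (↑e : V) ≠ (νm x).1 →
      ∀ e' : ↥(G.neighborSet (νm y).2),
        (face (nadj (θc h x'))).Adj (νm y).2 ↑e' → (↑e' : V) ≠ (νm y).1 →
      ∀ (wlk : G.Walk (νm x).2 (νm y).2), WalkIn (face h) wlk →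
        (∀ z ∈ wlk.support, c < φ z) →
        transport θ wlk e = e'
  lam_spec : ∀ ⦃x y : Vc⦄ (h : Gc.Adj x y) (x' : ↥(Gc.neighborSet x)), (↑x' : Vc) ≠ y →
      ∀ e : ↥(G.neighborSet (νm x).2),
        (face (nadj x')).Adj (νm x).2 ↑e → (↑e : V) ≠ (νm x).1 →
      ∀ (wlk : G.Walk (νm x).2 (νm y).2), WalkIn (face h) wlk →
        (∀ z ∈ wlk.support, c < φ z) →
        transNum θ lam wlk e = lamc h x'
  alpha_spec : ∀ ⦃x y : Vc⦄ (h : Gc.Adj x y) (hpq : G.Adj (νm x).1 (νm x).2)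
      (e : ↥(G.neighborSet (νm x).2)),
      (face h).Adj (νm x).2 ↑e → (↑e : V) ≠ (νm x).1 →
      (↑(αc h) : W) = α (nadj e) - (ξ (α (nadj e)) / ξ (α hpq.symm)) • α hpq.symm

end CrossSection
section BlowUp

variable {V' : Type u'} {W : Type v} [AddCommGroup W] [Module ℝ W]

/-- A blow-up system for the subskeleton `H`: positive scalars on the normal edges with
`n(e') = λ_e(e') · n(θ_e(e'))` along edges of `H`. -/
def IsBlowUpSystem {G : SimpleGraph V} (θ : GraphConn G) (lam : CompatSys G)
    (H : G.Subgraph) (n : ∀ p : V, ↥(G.neighborSet p) → ℝ) : Prop :=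
  (∀ p ∈ H.verts, ∀ e : ↥(G.neighborSet p), ¬ H.Adj p ↑e → 0 < n p e) ∧
  (∀ ⦃p q : V⦄ (h : H.Adj p q) (e : ↥(G.neighborSet p)), ¬ H.Adj p ↑e →
      n p e = lam (H.adj_sub h) e * n q (θ (H.adj_sub h) e))

/-- No normal edge of `H` has its terminal vertex in `H`. -/
def NoChord {G : SimpleGraph V} (H : G.Subgraph) : Prop :=
  ∀ p ∈ H.verts, ∀ e : ↥(G.neighborSet p), ¬ H.Adj p ↑e → (↑e : V) ∉ H.verts

/-- Specification of the blow-up `(G', θ', λ', α')` of the generalized 1-skeleton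
`(G, θ, λ, α)` along the subskeleton `H`, with respect to the blow-up system `n`.
`β` is the blow-down map on vertices and `z p e` is the singular-locus vertex `z^p_e`
(for `p ∈ H.verts` and `e` normal to `H` at `p`). -/
structure IsBlowUp (G : SimpleGraph V) (θ : GraphConn G) (lam : CompatSys G)
    (α : AxialFn G W) (H : G.Subgraph) (n : ∀ p : V, ↥(G.neighborSet p) → ℝ)
    (G' : SimpleGraph V') (θ' : GraphConn G') (lam' : CompatSys G') (α' : AxialFn G' W)
    (β : V' → V) (z : ∀ p : V, ↥(G.neighborSet p) → V') : Prop where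
  conn' : IsConnection G' θ'
  compat' : IsCompatSystem G' θ' lam'
  beta_z : ∀ p ∈ H.verts, ∀ e : ↥(G.neighborSet p), ¬ H.Adj p ↑e → β (z p e) = p
  z_inj : ∀ ⦃p p' : V⦄, p ∈ H.verts → p' ∈ H.verts →
      ∀ ⦃e : ↥(G.neighborSet p)⦄ ⦃e' : ↥(G.neighborSet p')⦄,
        ¬ H.Adj p ↑e → ¬ H.Adj p' ↑e' → z p e = z p' e' → p = p' ∧ (↑e : V) = ↑e'
  sing_surj : ∀ x' : V', β x' ∈ H.verts →
      ∃ (p : V) (_ : p ∈ H.verts) (e : ↥(G.neighborSet p)), ¬ H.Adj p ↑e ∧ x' = z p e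
  beta_inj : ∀ ⦃x' y' : V'⦄, β x' = β y' → β x' ∉ H.verts → x' = y'
  beta_surj : ∀ x : V, x ∉ H.verts → ∃ x' : V', β x' = x
  adj_iff : ∀ x' y' : V', G'.Adj x' y' ↔
      ((β x' ∉ H.verts ∧ β y' ∉ H.verts ∧ G.Adj (β x') (β y')) ∨
       (∃ (p : V) (_ : p ∈ H.verts) (e : ↥(G.neighborSet p)) (_ : ¬ H.Adj p ↑e),
          (x' = z p e ∧ β y' = ↑e ∧ β y' ∉ H.verts) ∨
          (y' = z p e ∧ β x' = ↑e ∧ β x' ∉ H.verts)) ∨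
       (∃ (p : V) (_ : p ∈ H.verts) (e e' : ↥(G.neighborSet p))
          (_ : ¬ H.Adj p ↑e) (_ : ¬ H.Adj p ↑e'),
          (↑e : V) ≠ ↑e' ∧ x' = z p e ∧ y' = z p e') ∨
       (∃ (p q : V) (hpq : H.Adj p q) (e : ↥(G.neighborSet p)) (_ : ¬ H.Adj p ↑e),
          x' = z p e ∧ y' = z q (θ (H.adj_sub hpq) e)))
  proj_adj : ∀ ⦃x' w' : V'⦄, G'.Adj x' w' → β x' ∉ H.verts → G.Adj (β x') (β w')
  -- axial function
  alpha_ns : ∀ ⦃x' y' : V'⦄ (h' : G'.Adj x' y'), β x' ∉ H.verts →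
      ∀ (h : G.Adj (β x') (β y')), α' h' = α h
  alpha_t : ∀ ⦃p : V⦄, p ∈ H.verts → ∀ (e : ↥(G.neighborSet p)), ¬ H.Adj p ↑e →
      ∀ ⦃y' : V'⦄ (h' : G'.Adj (z p e) y'), β y' = ↑e →
        α' h' = (n p e)⁻¹ • α (nadj e)
  alpha_h : ∀ ⦃p q : V⦄ (hpq : H.Adj p q) (e : ↥(G.neighborSet p)), ¬ H.Adj p ↑e →
      ∀ (h' : G'.Adj (z p e) (z q (θ (H.adj_sub hpq) e))), α' h' = α (H.adj_sub hpq)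
  alpha_v : ∀ ⦃p : V⦄, p ∈ H.verts →
      ∀ (e e' : ↥(G.neighborSet p)), ¬ H.Adj p ↑e → ¬ H.Adj p ↑e' → (↑e : V) ≠ ↑e' →
      ∀ (h' : G'.Adj (z p e) (z p e')),
        α' h' = α (nadj e') - (n p e' / n p e) • α (nadj e)
  -- connection, on edges not issuing from the singular locus
  conn_ns : ∀ ⦃x' y' : V'⦄ (h' : G'.Adj x' y'), β x' ∉ H.verts → β y' ∉ H.verts →
      ∀ (h : G.Adj (β x') (β y')) (w' : ↥(G'.neighborSet x')) (w : ↥(G.neighborSet (β x'))),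
        (↑w : V) = β ↑w' → β ↑(θ' h' w') = ↑(θ h w)
  -- connection along `z^p_e → t(e)`
  conn_t_v : ∀ ⦃p : V⦄, p ∈ H.verts → ∀ (e : ↥(G.neighborSet p)), ¬ H.Adj p ↑e →
      ∀ ⦃y' : V'⦄ (h' : G'.Adj (z p e) y'), β y' = ↑e →
      ∀ (e'' : ↥(G.neighborSet p)), ¬ H.Adj p ↑e'' → (↑e'' : V) ≠ ↑e →
      ∀ (w' : ↥(G'.neighborSet (z p e))), (↑w' : V') = z p e'' →
        β ↑(θ' h' w') = ↑(θ (nadj e) e'')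
  conn_t_h : ∀ ⦃p : V⦄, p ∈ H.verts → ∀ (e : ↥(G.neighborSet p)), ¬ H.Adj p ↑e →
      ∀ ⦃y' : V'⦄ (h' : G'.Adj (z p e) y'), β y' = ↑e →
      ∀ ⦃r : V⦄ (hpr : H.Adj p r)
        (w' : ↥(G'.neighborSet (z p e))), (↑w' : V') = z r (θ (H.adj_sub hpr) e) →
      ∀ (rr : ↥(G.neighborSet p)), (↑rr : V) = r →
        β ↑(θ' h' w') = ↑(θ (nadj e) rr)
  -- connection along a horizontal edge `z^p_e → z^q_f`
  conn_h_t : ∀ ⦃p q : V⦄ (hpq : H.Adj p q) (e : ↥(G.neighborSet p)), ¬ H.Adj p ↑e →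
      ∀ (h' : G'.Adj (z p e) (z q (θ (H.adj_sub hpq) e)))
        (w' : ↥(G'.neighborSet (z p e))), β ↑w' = ↑e →
        β ↑(θ' h' w') = ↑(θ (H.adj_sub hpq) e)
  conn_h_v : ∀ ⦃p q : V⦄ (hpq : H.Adj p q) (e : ↥(G.neighborSet p)), ¬ H.Adj p ↑e →
      ∀ (h' : G'.Adj (z p e) (z q (θ (H.adj_sub hpq) e)))
        (e'' : ↥(G.neighborSet p)), ¬ H.Adj p ↑e'' → (↑e'' : V) ≠ ↑e →
      ∀ (w' : ↥(G'.neighborSet (z p e))), (↑w' : V') = z p e'' →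
        (↑(θ' h' w') : V') = z q (θ (H.adj_sub hpq) e'')
  conn_h_h : ∀ ⦃p q : V⦄ (hpq : H.Adj p q) (e : ↥(G.neighborSet p)), ¬ H.Adj p ↑e →
      ∀ (h' : G'.Adj (z p e) (z q (θ (H.adj_sub hpq) e)))
        ⦃r : V⦄ (hpr : H.Adj p r)
        (w' : ↥(G'.neighborSet (z p e))), (↑w' : V') = z r (θ (H.adj_sub hpr) e) →
      ∀ (rr : ↥(G.neighborSet p)), (↑rr : V) = r →
      ∀ (s : V), s = ↑(θ (H.adj_sub hpq) rr) →
      ∀ (hqs : H.Adj q s),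
        (↑(θ' h' w') : V') = z s (θ (H.adj_sub hqs) (θ (H.adj_sub hpq) e))
  -- connection along a vertical edge `z^p_e → z^p_{e'}`
  conn_v_t : ∀ ⦃p : V⦄, p ∈ H.verts →
      ∀ (e e' : ↥(G.neighborSet p)), ¬ H.Adj p ↑e → ¬ H.Adj p ↑e' → (↑e : V) ≠ ↑e' →
      ∀ (h' : G'.Adj (z p e) (z p e')) (w' : ↥(G'.neighborSet (z p e))), β ↑w' = ↑e →
        β ↑(θ' h' w') = ↑e'
  conn_v_h : ∀ ⦃p : V⦄, p ∈ H.verts →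
      ∀ (e e' : ↥(G.neighborSet p)), ¬ H.Adj p ↑e → ¬ H.Adj p ↑e' → (↑e : V) ≠ ↑e' →
      ∀ (h' : G'.Adj (z p e) (z p e')) ⦃r : V⦄ (hpr : H.Adj p r)
        (w' : ↥(G'.neighborSet (z p e))), (↑w' : V') = z r (θ (H.adj_sub hpr) e) →
        (↑(θ' h' w') : V') = z r (θ (H.adj_sub hpr) e')
  conn_v_v : ∀ ⦃p : V⦄, p ∈ H.verts →
      ∀ (e e' e'' : ↥(G.neighborSet p)), ¬ H.Adj p ↑e → ¬ H.Adj p ↑e' → ¬ H.Adj p ↑e'' →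
        (↑e : V) ≠ ↑e' → (↑e'' : V) ≠ ↑e → (↑e'' : V) ≠ ↑e' →
      ∀ (h' : G'.Adj (z p e) (z p e')) (w' : ↥(G'.neighborSet (z p e))),
        (↑w' : V') = z p e'' → (↑(θ' h' w') : V') = z p e''
  -- compatibility system
  lam_ns : ∀ ⦃x' y' : V'⦄ (h' : G'.Adj x' y'), β x' ∉ H.verts →
      ∀ (h : G.Adj (β x') (β y')) (w' : ↥(G'.neighborSet x')) (w : ↥(G.neighborSet (β x'))),
        (↑w : V) = β ↑w' → lam' h' w' = lam h w
  lam_t_v : ∀ ⦃p : V⦄, p ∈ H.verts → ∀ (e : ↥(G.neighborSet p)), ¬ H.Adj p ↑e →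
      ∀ ⦃y' : V'⦄ (h' : G'.Adj (z p e) y'), β y' = ↑e →
      ∀ (e'' : ↥(G.neighborSet p)), ¬ H.Adj p ↑e'' → (↑e'' : V) ≠ ↑e →
      ∀ (w' : ↥(G'.neighborSet (z p e))), (↑w' : V') = z p e'' →
        lam' h' w' = lam (nadj e) e''
  lam_t_h : ∀ ⦃p : V⦄, p ∈ H.verts → ∀ (e : ↥(G.neighborSet p)), ¬ H.Adj p ↑e →
      ∀ ⦃y' : V'⦄ (h' : G'.Adj (z p e) y'), β y' = ↑e →
      ∀ ⦃r : V⦄ (hpr : H.Adj p r)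
        (w' : ↥(G'.neighborSet (z p e))), (↑w' : V') = z r (θ (H.adj_sub hpr) e) →
      ∀ (rr : ↥(G.neighborSet p)), (↑rr : V) = r →
        lam' h' w' = lam (nadj e) rr
  lam_h_t : ∀ ⦃p q : V⦄ (hpq : H.Adj p q) (e : ↥(G.neighborSet p)), ¬ H.Adj p ↑e →
      ∀ (h' : G'.Adj (z p e) (z q (θ (H.adj_sub hpq) e)))
        (w' : ↥(G'.neighborSet (z p e))), β ↑w' = ↑e → lam' h' w' = 1
  lam_h_v : ∀ ⦃p q : V⦄ (hpq : H.Adj p q) (e : ↥(G.neighborSet p)), ¬ H.Adj p ↑e →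
      ∀ (h' : G'.Adj (z p e) (z q (θ (H.adj_sub hpq) e)))
        (e'' : ↥(G.neighborSet p)), ¬ H.Adj p ↑e'' → (↑e'' : V) ≠ ↑e →
      ∀ (w' : ↥(G'.neighborSet (z p e))), (↑w' : V') = z p e'' →
        lam' h' w' = lam (H.adj_sub hpq) e''
  lam_h_h : ∀ ⦃p q : V⦄ (hpq : H.Adj p q) (e : ↥(G.neighborSet p)), ¬ H.Adj p ↑e →
      ∀ (h' : G'.Adj (z p e) (z q (θ (H.adj_sub hpq) e)))
        ⦃r : V⦄ (hpr : H.Adj p r)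
        (w' : ↥(G'.neighborSet (z p e))), (↑w' : V') = z r (θ (H.adj_sub hpr) e) →
      ∀ (rr : ↥(G.neighborSet p)), (↑rr : V) = r →
        lam' h' w' = lam (H.adj_sub hpq) rr
  lam_v : ∀ ⦃p : V⦄, p ∈ H.verts →
      ∀ (e e' : ↥(G.neighborSet p)), ¬ H.Adj p ↑e → ¬ H.Adj p ↑e' → (↑e : V) ≠ ↑e' →
      ∀ (h' : G'.Adj (z p e) (z p e')) (w' : ↥(G'.neighborSet (z p e))),
        lam' h' w' = 1

end BlowUp
section Misc

variable {W : Type v} [AddCommGroup W] [Module ℝ W]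

/-- The induced subgraph of `G` on a set of vertices. -/
def inducedSub (G : SimpleGraph V) (s : Set V) : G.Subgraph where
  verts := s
  Adj p q := G.Adj p q ∧ p ∈ s ∧ q ∈ s
  adj_sub := fun h => h.1
  edge_vert := fun h => h.2.1
  symm := ⟨fun _ _ h => ⟨h.1.symm, h.2.2, h.2.1⟩⟩

/-- The graph of the direct product of a graph with the interval. -/
def prodIntervalGraph (G : SimpleGraph V) : SimpleGraph (V × Bool) where
  Adj x y := (x.2 = y.2 ∧ G.Adj x.1 y.1) ∨ (x.1 = y.1 ∧ x.2 ≠ y.2)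
  symm := by
    constructor
    rintro x y (⟨h1, h2⟩ | ⟨h1, h2⟩)
    · exact Or.inl ⟨h1.symm, h2.symm⟩
    · exact Or.inr ⟨h1.symm, Ne.symm h2⟩
  loopless := by
    constructor
    rintro x (⟨_, h⟩ | ⟨_, h⟩)
    · exact G.ne_of_adj h rfl
    · exact h rfl

/-- Specification of the direct product of the generalized 1-skeleton `(G, θ, λ, α)` in `W`
with the interval 1-skeleton `(I, α_I, θ_I, λ_I)` in `ℝ`: the result is the quadruple
`(prodIntervalGraph G, θ', λ', α')` in `W × ℝ`. -/
structure IsIntervalProduct (G : SimpleGraph V) (θ : GraphConn G) (lam : CompatSys G)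
    (α : AxialFn G W) (θ' : GraphConn (prodIntervalGraph G))
    (lam' : CompatSys (prodIntervalGraph G))
    (α' : AxialFn (prodIntervalGraph G) (W × ℝ)) : Prop where
  conn' : IsConnection (prodIntervalGraph G) θ'
  compat' : IsCompatSystem (prodIntervalGraph G) θ' lam'
  alpha_hor : ∀ ⦃x y : V × Bool⦄ (h' : (prodIntervalGraph G).Adj x y) (h : G.Adj x.1 y.1),
      x.2 = y.2 → α' h' = (α h, 0)
  alpha_up : ∀ ⦃x y : V × Bool⦄ (h' : (prodIntervalGraph G).Adj x y),
      x.1 = y.1 → x.2 = false → α' h' = (0, 1)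
  alpha_down : ∀ ⦃x y : V × Bool⦄ (h' : (prodIntervalGraph G).Adj x y),
      x.1 = y.1 → x.2 = true → α' h' = (0, -1)
  conn_hor_hor : ∀ ⦃x y : V × Bool⦄ (h' : (prodIntervalGraph G).Adj x y) (h : G.Adj x.1 y.1),
      x.2 = y.2 → ∀ (w' : ↥((prodIntervalGraph G).neighborSet x)) (w : ↥(G.neighborSet x.1)),
        (↑w' : V × Bool) = (↑w, x.2) → (↑(θ' h' w') : V × Bool) = (↑(θ h w), x.2)
  conn_hor_ver : ∀ ⦃x y : V × Bool⦄ (h' : (prodIntervalGraph G).Adj x y),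
      x.2 = y.2 → ∀ (w' : ↥((prodIntervalGraph G).neighborSet x)),
        (↑w' : V × Bool) = (x.1, !x.2) → (↑(θ' h' w') : V × Bool) = (y.1, !x.2)
  conn_ver_hor : ∀ ⦃x y : V × Bool⦄ (h' : (prodIntervalGraph G).Adj x y),
      x.1 = y.1 → ∀ (w' : ↥((prodIntervalGraph G).neighborSet x)) (w : ↥(G.neighborSet x.1)),
        (↑w' : V × Bool) = (↑w, x.2) → (↑(θ' h' w') : V × Bool) = (↑w, y.2)
  lam_hor_hor : ∀ ⦃x y : V × Bool⦄ (h' : (prodIntervalGraph G).Adj x y) (h : G.Adj x.1 y.1),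
      x.2 = y.2 → ∀ (w' : ↥((prodIntervalGraph G).neighborSet x)) (w : ↥(G.neighborSet x.1)),
        (↑w' : V × Bool) = (↑w, x.2) → lam' h' w' = lam h w
  lam_hor_ver : ∀ ⦃x y : V × Bool⦄ (h' : (prodIntervalGraph G).Adj x y),
      x.2 = y.2 → ∀ (w' : ↥((prodIntervalGraph G).neighborSet x)),
        (↑w' : V × Bool) = (x.1, !x.2) → lam' h' w' = 1
  lam_ver : ∀ ⦃x y : V × Bool⦄ (h' : (prodIntervalGraph G).Adj x y),
      x.1 = y.1 → ∀ (w' : ↥((prodIntervalGraph G).neighborSet x)), lam' h' w' = 1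

end Misc

section Polytope

/-- `(G, A)` is the vertex–edge graph of a simple `d`-polytope `S ⊆ ℝ^d`, with
`A(uv) = v - u` along each oriented edge: `g` identifies the vertices of `G` with the
extreme points of `S = convexHull F`, `S` is full-dimensional, adjacency corresponds to
exposed one-dimensional faces (segments), and `A` is given by differences of vertices. -/
def IsPolytopeSkeleton {d : ℕ} (G : SimpleGraph V) (A : AxialFn G (Fin d → ℝ)) : Prop :=
  ∃ (F : Finset (Fin d → ℝ)) (g : V → (Fin d → ℝ)),
    affineSpan ℝ (convexHull ℝ (F : Set (Fin d → ℝ))) = ⊤ ∧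
    Function.Injective g ∧
    Set.range g = Set.extremePoints ℝ (convexHull ℝ (F : Set (Fin d → ℝ))) ∧
    (∀ p q : V, G.Adj p q ↔ (g p ≠ g q ∧
        IsExposed ℝ (convexHull ℝ (F : Set (Fin d → ℝ))) (segment ℝ (g p) (g q)))) ∧
    (∀ ⦃p q : V⦄ (h : G.Adj p q), A h = g q - g p)

end Polytope

/-- Key transport lemma: along any walk in a totally geodesic subgraph `H`, a normal edge
stays normal, its axial vector stays in any submodule `S` containing the initial data, and
all `H`-edges at the current vertex have axial vectors in `S`. -/
lemma transport_key {V : Type u} {n : ℕ}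
    (G : SimpleGraph V) (θ : GraphConn G) (lam : CompatSys G)
    (α : AxialFn G (Fin n → ℝ))
    (hsk : IsOneSkeleton G θ lam α) (H : G.Subgraph) (hsub : IsSubskeleton θ H) :
    ∀ {p q : V} (w : G.Walk p q), WalkIn H w →
      ∀ e : ↥(G.neighborSet p), ¬ H.Adj p ↑e →
      ∀ S : Submodule ℝ (Fin n → ℝ), α (nadj e) ∈ S →
        (∀ f : ↥(G.neighborSet p), H.Adj p ↑f → α (nadj f) ∈ S) →
        ¬ H.Adj q ↑(transport θ w e) ∧ α (nadj (transport θ w e)) ∈ S ∧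
          (∀ f : ↥(G.neighborSet q), H.Adj q ↑f → α (nadj f) ∈ S) := by
  intro p q w
  induction w with
  | nil =>
    intro _ e he S he1 he2
    exact ⟨he, he1, he2⟩
  | @cons p r q h w ih =>
    intro hW e he S he1 he2
    have hHpr : H.Adj p r := by
      have := hW ⟨(p, r), h⟩ (by rw [SimpleGraph.Walk.darts_cons]; exact List.mem_cons_self ..)
      exact this
    have hW' : WalkIn H w := fun d hd =>
      hW d (by rw [SimpleGraph.Walk.darts_cons]; exact List.mem_cons_of_mem _ hd)
    have hα_h : α h ∈ S := he2 ⟨r, h⟩ hHpr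
    have hne_r : (↑e : V) ≠ r := fun hh => he (by rwa [hh])
    obtain ⟨c, hc⟩ := hsk.1.axial.2 h e hne_r
    have hlam := hsk.1.compat.1 h e
    have hmem' : α (nadj (θ h e)) ∈ S := by
      have h1 : lam h e • α (nadj (θ h e)) = α (nadj e) - c • α h := by
        rw [sub_eq_iff_eq_add] at hc; rw [hc]; abel
      have h2 : α (nadj (θ h e)) = (lam h e)⁻¹ • (α (nadj e) - c • α h) := by
        rw [← h1, smul_smul, inv_mul_cancel₀ (ne_of_gt hlam), one_smul]
      rw [h2]; exact S.smul_mem _ (S.sub_mem he1 (S.smul_mem _ hα_h))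
    have hnorm : ¬ H.Adj r ↑(θ h e) := by
      intro hcon
      have hg := hsub.geodesic hHpr.symm (θ h e) hcon
      have hθ : θ (H.adj_sub hHpr.symm) (θ h e) = e := by
        show θ h.symm (θ h e) = e
        rw [hsk.1.conn.2 h]; exact (θ h).symm_apply_apply e
      rw [hθ] at hg
      exact he hg
    have he2' : ∀ f : ↥(G.neighborSet r), H.Adj r ↑f → α (nadj f) ∈ S := by
      intro f hf
      have hgeo := hsub.geodesic hHpr.symm f hf
      have hf₀H : H.Adj p ↑((θ h).symm f) := by
        have heq : θ (H.adj_sub hHpr.symm) f = (θ h).symm f := by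
          show θ h.symm f = (θ h).symm f
          rw [hsk.1.conn.2 h]
        rwa [heq] at hgeo
      have hff : f = θ h ((θ h).symm f) := ((θ h).apply_symm_apply f).symm
      by_cases hcase : (↑((θ h).symm f) : V) = r
      · have hf0 : (θ h).symm f = ⟨r, h⟩ := Subtype.ext hcase
        rw [hff, hf0, hsk.1.conn.1 h]
        have hrev : α (nadj (⟨p, h.symm⟩ : ↥(G.neighborSet r))) = - α h := by
          show α h.symm = - α h
          exact hsk.2.1 h
        rw [hrev]; exact S.neg_mem hα_h
      · obtain ⟨c', hc'⟩ := hsk.1.axial.2 h ((θ h).symm f) hcase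
        have hlam' := hsk.1.compat.1 h ((θ h).symm f)
        have hmemf₀ := he2 ((θ h).symm f) hf₀H
        rw [hff]
        have h1 : lam h ((θ h).symm f) • α (nadj (θ h ((θ h).symm f))) =
            α (nadj ((θ h).symm f)) - c' • α h := by
          rw [sub_eq_iff_eq_add] at hc'; rw [hc']; abel
        have h2 : α (nadj (θ h ((θ h).symm f))) =
            (lam h ((θ h).symm f))⁻¹ • (α (nadj ((θ h).symm f)) - c' • α h) := by
          rw [← h1, smul_smul, inv_mul_cancel₀ (ne_of_gt hlam'), one_smul]
        rw [h2]; exact S.smul_mem _ (S.sub_mem hmemf₀ (S.smul_mem _ hα_h))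
    exact ih hW' (θ h e) hnorm S hmem' he2'

/-- In a 4-independent 1-skeleton, every 2-valent subskeleton has trivial
normal holonomy. -/
theorem every_two_valent_subskeleton_of_four_independent_has_trivial_normal_holonomy
    {V : Type u} [Fintype V] {n : ℕ}
    (G : SimpleGraph V) (θ : GraphConn G) (lam : CompatSys G)
    (α : AxialFn G (Fin n → ℝ))
    (hsk : IsOneSkeleton G θ lam α) (h4 : kIndep G α 4) :
    ∀ H : G.Subgraph, IsSubskeleton θ H →
      (∀ p ∈ H.verts, (H.neighborSet p).ncard = 2) →
      TrivialNormalHolonomy θ H := by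
  classical
  intro H hsub hval p w hW e he
  cases w with
  | nil => rfl
  | @cons _ r _ h w' =>
    have hHpr : H.Adj p r := by
      have := hW ⟨(p, r), h⟩ (by rw [SimpleGraph.Walk.darts_cons]; exact List.mem_cons_self ..)
      exact this
    have hpv : p ∈ H.verts := H.edge_vert hHpr
    obtain ⟨q₁, q₂, hq12, hset⟩ := Set.ncard_eq_two.mp (hval p hpv)
    have hq₁ : H.Adj p q₁ := by
      have : q₁ ∈ H.neighborSet p := by rw [hset]; exact Set.mem_insert _ _
      exact this
    have hq₂ : H.Adj p q₂ := by
      have : q₂ ∈ H.neighborSet p := by rw [hset]; exact Set.mem_insert_of_mem _ rfl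
      exact this
    set f₁ : ↥(G.neighborSet p) := ⟨q₁, H.adj_sub hq₁⟩ with hf₁
    set f₂ : ↥(G.neighborSet p) := ⟨q₂, H.adj_sub hq₂⟩ with hf₂
    set S := Submodule.span ℝ ({α (nadj e), α (nadj f₁), α (nadj f₂)} : Set (Fin n → ℝ))
      with hS
    have he1 : α (nadj e) ∈ S := Submodule.subset_span (Set.mem_insert _ _)
    have he2 : ∀ f : ↥(G.neighborSet p), H.Adj p ↑f → α (nadj f) ∈ S := by
      intro f hf
      have : (↑f : V) ∈ H.neighborSet p := hf
      rw [hset] at this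
      rcases this with h1 | h1
      · have : f = f₁ := Subtype.ext h1
        rw [this]
        exact Submodule.subset_span (Set.mem_insert_of_mem _ (Set.mem_insert _ _))
      · have : f = f₂ := Subtype.ext h1
        rw [this]
        exact Submodule.subset_span
          (Set.mem_insert_of_mem _ (Set.mem_insert_of_mem _ rfl))
    obtain ⟨hn', hmem', -⟩ :=
      transport_key G θ lam α hsk H hsub (SimpleGraph.Walk.cons h w') hW e he S he1 he2
    set e' := transport θ (SimpleGraph.Walk.cons h w') e with he'
    by_contra hne
    have hee1 : e ≠ f₁ := fun hh => he (by rw [show (↑e : V) = q₁ from congrArg Subtype.val hh]; exact hq₁)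
    have hee2 : e ≠ f₂ := fun hh => he (by rw [show (↑e : V) = q₂ from congrArg Subtype.val hh]; exact hq₂)
    have hee1' : e' ≠ f₁ := fun hh => hn' (by rw [show (↑e' : V) = q₁ from congrArg Subtype.val hh]; exact hq₁)
    have hee2' : e' ≠ f₂ := fun hh => hn' (by rw [show (↑e' : V) = q₂ from congrArg Subtype.val hh]; exact hq₂)
    have hf12 : f₁ ≠ f₂ := fun hh => hq12 (congrArg Subtype.val hh)
    have hne' : e' ≠ e := hne
    set s : Finset ↥(G.neighborSet p) := {e', e, f₁, f₂} with hs
    have hmem_e' : e' ∈ s := by simp [hs]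
    have hmem_e : e ∈ s := by simp [hs]
    have hmem_f₁ : f₁ ∈ s := by simp [hs]
    have hmem_f₂ : f₂ ∈ s := by simp [hs]
    have hcard : s.card = 4 := by
      rw [hs]
      rw [Finset.card_insert_of_notMem (by simp [hne', hee1', hee2']),
        Finset.card_insert_of_notMem (by simp [hee1, hee2]),
        Finset.card_insert_of_notMem (by simp [hf12]), Finset.card_singleton]
    have hli := h4 p s hcard
    have hx : e' ∈ (↑s : Set ↥(G.neighborSet p)) := by exact_mod_cast hmem_e'
    have hnotmem : (⟨e', hx⟩ : ↥(↑s : Set ↥(G.neighborSet p))) ∉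
        {j : ↥(↑s : Set ↥(G.neighborSet p)) | (↑j : ↥(G.neighborSet p)) ≠ e'} := by
      simp
    have hnot := hli.notMem_span_image hnotmem
    apply hnot
    have hsub2 : ({α (nadj e), α (nadj f₁), α (nadj f₂)} : Set (Fin n → ℝ)) ⊆
        (fun j : ↥(↑s : Set ↥(G.neighborSet p)) => α (nadj (j : ↥(G.neighborSet p)))) ''
          {j | (↑j : ↥(G.neighborSet p)) ≠ e'} := by
      intro x hx2
      rcases hx2 with rfl | rfl | rfl
      · exact ⟨⟨e, by exact_mod_cast hmem_e⟩, fun hh => hne' hh.symm, rfl⟩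
      · exact ⟨⟨f₁, by exact_mod_cast hmem_f₁⟩, fun hh => hee1' hh.symm, rfl⟩
      · exact ⟨⟨f₂, by exact_mod_cast hmem_f₂⟩, fun hh => hee2' hh.symm, rfl⟩
    exact Submodule.span_mono hsub2 hmem'
end

section
/- Let (Γ, α, θ, λ) be a d-valent reducible 1-skeleton in ℝ^n and let (Γ, A, θ, λ) be a lift of it: A is an effective generalized axial function for (Γ, θ, λ) with values in ℝ^N (n < N ≤ d) and there is a surjective linear map P : ℝ^N → ℝ^n with α = P ∘ A. Then (Γ, A, θ, λ) is reducible: for every polarizing covector ξ of (Γ, α, θ, λ), the covector Ξ = ξ ∘ P is generic and polarizing for (Γ, A, θ, λ), the 2-faces of (Γ, A, θ, λ) coincide with the 2-faces of (Γ, α, θ, λ), and hence (Γ, A, θ, λ) has enough 2-faces. -/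
open SimpleGraph

universe u u' v

variable {V : Type u}

/- ===================== Auxiliary machinery for Statement 16 ===================== -/

section AuxAnalytic

open Real

lemma floorStep {x y : ℝ} (hxy : x < y) (hyx : y < x + π)
    (hx : Real.cos x ≠ 0) (hy : Real.cos y ≠ 0) :
    (⌊(y + π/2) / (2*π)⌋ = ⌊(x + π/2) / (2*π)⌋ + 1 ∨
      ⌊(y + π/2) / (2*π)⌋ = ⌊(x + π/2) / (2*π)⌋)
    ∧ (⌊(y + π/2) / (2*π)⌋ = ⌊(x + π/2) / (2*π)⌋ + 1 ↔
        (Real.cos x < 0 ∧ 0 < Real.cos y)) := by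
  have hπ : (0:ℝ) < π := Real.pi_pos
  have h2π : (0:ℝ) < 2*π := by linarith
  set u := x + π/2 with hu
  set v := y + π/2 with hv
  set k : ℤ := ⌊u / (2*π)⌋ with hk
  set s : ℝ := u - 2*π*k with hs
  have hs0 : 0 ≤ s := by
    have := Int.floor_le (u / (2*π))
    have : (k:ℝ) * (2*π) ≤ u := by
      rw [hk]; nlinarith [Int.floor_le (u / (2*π)), div_mul_cancel₀ u (ne_of_gt h2π)]
    simp only [hs]; linarith
  have hs2 : s < 2*π := by
    have h1 : u / (2*π) < k + 1 := Int.lt_floor_add_one _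
    have : u < (k+1) * (2*π) := by
      calc u = (u / (2*π)) * (2*π) := by field_simp
      _ < (k+1) * (2*π) := by apply mul_lt_mul_of_pos_right h1 h2π
    simp only [hs]; push_cast; linarith
  -- cos x = sin s
  have hcosx : Real.cos x = Real.sin s := by
    have : x = u - π/2 := by rw [hu]; ring
    rw [this, Real.cos_sub_pi_div_two]
    have : u = s + k * (2*π) := by rw [hs]; ring
    rw [this, Real.sin_add_int_mul_two_pi]
  set d : ℝ := y - x with hd
  have hd0 : 0 < d := by linarith
  have hdπ : d < π := by linarith
  set t : ℝ := s + d with ht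
  have hcosy : Real.cos y = Real.sin t := by
    have h1 : y = v - π/2 := by rw [hv]; ring
    rw [h1, Real.cos_sub_pi_div_two]
    have : v = t + k * (2*π) := by rw [ht, hs, hv, hu, hd]; ring
    rw [this, Real.sin_add_int_mul_two_pi]
  have hsne0 : s ≠ 0 := by
    intro h; rw [hcosx, h, Real.sin_zero] at hx; exact hx rfl
  have hsneπ : s ≠ π := by
    intro h; rw [hcosx, h, Real.sin_pi] at hx; exact hx rfl
  have htne : t ≠ 2*π := by
    intro h
    rw [hcosy, h] at hy
    exact hy Real.sin_two_pi
  -- floor of v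
  have hvt : v = t + k * (2*π) := by rw [ht, hs, hv, hu, hd]; ring
  have hfloorv : ⌊v / (2*π)⌋ = k + ⌊t / (2*π)⌋ := by
    rw [hvt]
    rw [show (t + k * (2*π)) / (2*π) = t/(2*π) + k by field_simp]
    rw [Int.floor_add_intCast]; ring
  -- the sign equivalence
  have hsinS : Real.sin s < 0 ↔ π < s := by
    constructor
    · intro h
      by_contra hc
      push_neg at hc
      have : 0 < s := lt_of_le_of_ne hs0 (Ne.symm hsne0)
      have : s < π := lt_of_le_of_ne hc hsneπ
      nlinarith [Real.sin_pos_of_pos_of_lt_pi ‹0 < s› this]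
    · intro h
      have h1 : s - 2*π < 0 := by linarith
      have h2 : -π < s - 2*π := by linarith
      have := Real.sin_neg_of_neg_of_neg_pi_lt h1 h2
      rw [show s = (s - 2*π) + (1:ℤ)*(2*π) by push_cast; ring, Real.sin_add_int_mul_two_pi]
      exact this
  have key : (2*π ≤ t) ↔ (Real.sin s < 0 ∧ 0 < Real.sin t) := by
    constructor
    · intro h
      have hts : π < s := by linarith
      have ht3 : t < 3*π := by linarith
      have ht2 : 2*π < t := lt_of_le_of_ne h (Ne.symm htne)
      constructor
      · exact hsinS.2 hts
      · have h1 : 0 < t - 2*π := by linarith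
        have h2 : t - 2*π < π := by linarith
        have := Real.sin_pos_of_pos_of_lt_pi h1 h2
        rw [show t = (t - 2*π) + (1:ℤ)*(2*π) by push_cast; ring, Real.sin_add_int_mul_two_pi]
        exact this
    · rintro ⟨h1, h2⟩
      have hts : π < s := hsinS.1 h1
      by_contra hc
      push_neg at hc
      have ht1 : π < t := by linarith
      have h3 : t - 2*π < 0 := by linarith
      have h4 : -π < t - 2*π := by linarith
      have := Real.sin_neg_of_neg_of_neg_pi_lt h3 h4
      rw [show t = (t - 2*π) + (1:ℤ)*(2*π) by push_cast; ring, Real.sin_add_int_mul_two_pi] at h2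
      linarith
  have hfloor_t : ⌊t / (2*π)⌋ = if 2*π ≤ t then 1 else 0 := by
    have ht0 : 0 < t := by linarith
    have ht3 : t < 3*π := by linarith
    split_ifs with h
    · apply Int.floor_eq_iff.2
      refine ⟨?_, ?_⟩
      · push_cast
        rw [le_div_iff₀ h2π]; linarith
      · push_cast
        rw [div_lt_iff₀ h2π]; nlinarith
    · push_neg at h
      apply Int.floor_eq_iff.2
      refine ⟨?_, ?_⟩
      · push_cast
        positivity
      · push_cast
        rw [div_lt_iff₀ h2π]; nlinarith
  constructor
  · rw [hfloorv, hfloor_t]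
    split_ifs
    · left; ring
    · right; ring
  · rw [hfloorv, hfloor_t, hcosx, hcosy]
    split_ifs with h
    · exact ⟨fun _ => key.1 h, fun _ => rfl⟩
    · constructor
      · intro hc; exact absurd hc (by omega)
      · intro hc; exact absurd (key.2 hc) h

lemma twoPiCount (m : ℕ) (u : ℕ → ℂ)
    (h0 : ∀ i ≤ m, (u i).re ≠ 0)
    (hIm : ∀ i < m, 0 < ((u (i+1)) / (u i)).im)
    (hper : u m = u 0) :
    2 * π * (((Finset.range m).filter fun i => (u i).re < 0 ∧ 0 < (u (i+1)).re).card : ℝ)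
      = ∑ i ∈ Finset.range m, ((u (i+1)) / (u i)).arg := by
  have hπ : (0:ℝ) < π := Real.pi_pos
  have hne : ∀ i ≤ m, u i ≠ 0 := by
    intro i hi h
    exact h0 i hi (by rw [h]; rfl)
  set δ : ℕ → ℝ := fun i => ((u (i+1)) / (u i)).arg with hδdef
  have hδ : ∀ i < m, 0 < δ i ∧ δ i < π := by
    intro i hi
    constructor
    · rcases lt_or_eq_of_le (Complex.arg_nonneg_iff.2 (hIm i hi).le) with h | h
      · exact h
      · exfalso
        have := Complex.arg_eq_zero_iff.1 h.symm
        exact absurd this.2 (hIm i hi).ne'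
    · exact lt_of_le_of_ne (Complex.arg_le_pi _)
        (fun h => by
          have := Complex.arg_eq_pi_iff.1 h
          exact absurd this.2 (hIm i hi).ne')
  set Θ : ℕ → ℝ := fun i => (u 0).arg + ∑ k ∈ Finset.range i, δ k with hΘdef
  have hΘsucc : ∀ i, Θ (i+1) = Θ i + δ i := by
    intro i; simp only [hΘdef, Finset.sum_range_succ]; ring
  have hexp : ∀ i ≤ m, (‖u i‖ : ℂ) * Complex.exp (Θ i * Complex.I) = u i := by
    intro i
    induction i with
    | zero =>
      intro _
      have : Θ 0 = (u 0).arg := by simp [hΘdef]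
      rw [this]
      exact Complex.norm_mul_exp_arg_mul_I _
    | succ i ih =>
      intro hi
      have hi' : i ≤ m := Nat.le_of_succ_le hi
      have hilt : i < m := hi
      have hui : u i ≠ 0 := hne i hi'
      have hui1 : u (i+1) ≠ 0 := hne (i+1) hi
      have habsi : (‖u i‖ : ℂ) ≠ 0 := by
        simpa using (norm_ne_zero_iff.mpr hui)
      have habsi1 : (‖u (i+1)‖ : ℂ) ≠ 0 := by
        simpa using (norm_ne_zero_iff.mpr hui1)
      have h1 : Complex.exp (Θ i * Complex.I) = u i / (‖u i‖ : ℂ) := by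
        rw [eq_div_iff habsi, mul_comm]
        exact ih hi' 
      have h2 : (‖(u (i+1))/(u i)‖ : ℂ) * Complex.exp (δ i * Complex.I)
          = (u (i+1))/(u i) := Complex.norm_mul_exp_arg_mul_I _
      have habsdiv : (‖(u (i+1))/(u i)‖ : ℂ)
          = (‖u (i+1)‖ : ℂ) / (‖u i‖ : ℂ) := by
        rw [norm_div]; push_cast; ring
      rw [hΘsucc i]
      rw [show ((Θ i + δ i : ℝ) : ℂ) * Complex.I
            = Θ i * Complex.I + δ i * Complex.I by push_cast; ring]
      rw [Complex.exp_add, h1]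
      have h2' : Complex.exp (δ i * Complex.I)
          = ((u (i+1))/(u i)) / ((‖u (i+1)‖ : ℂ) / (‖u i‖ : ℂ)) := by
        rw [← habsdiv, eq_div_iff (by rw [habsdiv]; exact div_ne_zero habsi1 habsi), mul_comm]
        exact h2
      rw [h2']
      field_simp
  have hre : ∀ i ≤ m, (u i).re = ‖u i‖ * Real.cos (Θ i) := by
    intro i hi
    conv_lhs => rw [← hexp i hi]
    rw [Complex.re_ofReal_mul, Complex.exp_ofReal_mul_I_re]
  have habspos : ∀ i, i ≤ m → 0 < ‖u i‖ := by
    intro i hi; exact norm_pos_iff.mpr (hne i hi)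
  have hcosne : ∀ i ≤ m, Real.cos (Θ i) ≠ 0 := by
    intro i hi h
    apply h0 i hi
    rw [hre i hi, h, mul_zero]
  have hsign : ∀ i ≤ m, ((u i).re < 0 ↔ Real.cos (Θ i) < 0)
      ∧ (0 < (u i).re ↔ 0 < Real.cos (Θ i)) := by
    intro i hi
    rw [hre i hi]
    constructor
    · constructor
      · intro h; nlinarith [habspos i hi]
      · intro h; nlinarith [habspos i hi]
    · constructor
      · intro h; nlinarith [habspos i hi]
      · intro h; nlinarith [habspos i hi]
  set f : ℕ → ℤ := fun i => ⌊(Θ i + π/2)/(2*π)⌋ with hfdef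
  have hstep : ∀ i < m, (f (i+1) - f i : ℤ)
      = if (u i).re < 0 ∧ 0 < (u (i+1)).re then 1 else 0 := by
    intro i hi
    have hi' : i ≤ m := le_of_lt hi
    have hi1 : i + 1 ≤ m := hi
    have hxy : Θ i < Θ (i+1) := by
      rw [hΘsucc i]; linarith [(hδ i hi).1]
    have hyx : Θ (i+1) < Θ i + π := by
      rw [hΘsucc i]; linarith [(hδ i hi).2]
    obtain ⟨hAB, hiff⟩ := floorStep hxy hyx (hcosne i hi') (hcosne (i+1) hi1)
    have hiff0 : (f (i+1) = f i + 1) ↔ (Real.cos (Θ i) < 0 ∧ 0 < Real.cos (Θ (i+1))) := hiff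
    have hiff' : f (i+1) = f i + 1 ↔ ((u i).re < 0 ∧ 0 < (u (i+1)).re) := by
      rw [hiff0, (hsign i hi').1, (hsign (i+1) hi1).2]
    have hAB' : f (i+1) = f i + 1 ∨ f (i+1) = f i := hAB
    split_ifs with h
    · rw [hiff'.2 h]; ring
    · rcases hAB' with hA | hB
      · exact absurd (hiff'.1 hA) h
      · rw [hB]; ring
  -- telescoping
  have htel : ∑ i ∈ Finset.range m, ((f (i+1) - f i) : ℤ) = f m - f 0 :=
    Finset.sum_range_sub f m
  have hcount : ((((Finset.range m).filter
      fun i => (u i).re < 0 ∧ 0 < (u (i+1)).re).card : ℤ)) = f m - f 0 := by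
    rw [← htel]
    rw [Finset.sum_congr rfl (fun i hi => hstep i (Finset.mem_range.1 hi))]
    rw [Finset.sum_boole]
  -- winding number
  have habs0 : ‖u m‖ = ‖u 0‖ := by rw [hper]
  have hexpeq : Complex.exp ((Θ m - Θ 0 : ℝ) * Complex.I) = 1 := by
    have e1 := hexp m le_rfl
    have e2 := hexp 0 (Nat.zero_le m)
    rw [hper] at e1
    have habs0' : (‖u 0‖ : ℂ) ≠ 0 := by
      simpa using (norm_ne_zero_iff.mpr (hne 0 (Nat.zero_le m)))
    have : Complex.exp ((Θ m : ℝ) * Complex.I) = Complex.exp ((Θ 0 : ℝ) * Complex.I) := by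
      apply mul_left_cancel₀ habs0'
      rw [e1, e2]
    rw [show ((Θ m - Θ 0 : ℝ) : ℂ) * Complex.I
        = (Θ m : ℝ) * Complex.I - (Θ 0 : ℝ) * Complex.I by push_cast; ring]
    rw [Complex.exp_sub, this, div_self (Complex.exp_ne_zero _)]
  obtain ⟨N, hN⟩ := Complex.exp_eq_one_iff.1 hexpeq
  have hNreal : Θ m - Θ 0 = N * (2 * π) := by
    have := hN
    rw [show ((N : ℂ) * (2 * ↑π * Complex.I)) = ((N * (2*π) : ℝ) : ℂ) * Complex.I by
      push_cast; ring] at this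
    have := mul_right_cancel₀ Complex.I_ne_zero this
    exact_mod_cast congrArg Complex.re this
  have hfm : f m = f 0 + N := by
    rw [hfdef]
    simp only []
    have : (Θ m + π/2)/(2*π) = (Θ 0 + π/2)/(2*π) + N := by
      field_simp
      linarith [hNreal]
    rw [this, Int.floor_add_intCast]
  have hΘm : Θ m - Θ 0 = ∑ i ∈ Finset.range m, δ i := by
    simp [hΘdef]
  have hfinal : ((((Finset.range m).filter
      fun i => (u i).re < 0 ∧ 0 < (u (i+1)).re).card : ℤ)) = N := by
    rw [hcount, hfm]; ring
  calc 2 * π * (((Finset.range m).filter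
      fun i => (u i).re < 0 ∧ 0 < (u (i+1)).re).card : ℝ)
      = 2 * π * (N : ℝ) := by
        congr 1
        exact_mod_cast congrArg (fun z : ℤ => (z : ℝ)) hfinal
    _ = Θ m - Θ 0 := by rw [hNreal]; ring
    _ = ∑ i ∈ Finset.range m, δ i := hΘm

lemma seqPlane {n : ℕ} (a : ℕ → (Fin n → ℝ))
    (hli : LinearIndependent ℝ ![a 0, a 1])
    (hrec : ∀ i, ∃ c₁ c₂ : ℝ, c₁ < 0 ∧ a (i+2) = c₁ • a i + c₂ • a (i+1)) :
    ∃ w : ℕ → ℂ, (∀ i, 0 < ((w (i+1)) / (w i)).im) ∧ (∀ i, w i ≠ 0) ∧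
      (∀ i j, a i = a j → w i = w j) ∧
      (∀ (i : ℕ) (ρ : (Fin n → ℝ) →ₗ[ℝ] ℝ),
        ρ (a i) = (w i).re * ρ (a 0) + (w i).im * ρ (a 1)) := by
  set Pl : Submodule ℝ (Fin n → ℝ) := Submodule.span ℝ (Set.range ![a 0, a 1]) with hPl
  have mem2 : ∀ i, a i ∈ Pl ∧ a (i+1) ∈ Pl := by
    intro i
    induction i with
    | zero =>
      constructor
      · exact Submodule.subset_span ⟨0, rfl⟩
      · exact Submodule.subset_span ⟨1, rfl⟩
    | succ i ih =>
      refine ⟨ih.2, ?_⟩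
      obtain ⟨c₁, c₂, _, heq⟩ := hrec i
      rw [heq]
      exact Submodule.add_mem _ (Submodule.smul_mem _ _ ih.1) (Submodule.smul_mem _ _ ih.2)
  have mem : ∀ i, a i ∈ Pl := fun i => (mem2 i).1
  set b : Module.Basis (Fin 2) ℝ Pl := Module.Basis.span hli with hb
  set r : ℕ → (Fin 2 → ℝ) := fun i j => b.repr ⟨a i, mem i⟩ j with hr
  set w : ℕ → ℂ := fun i => Complex.mk (r i 0) (r i 1) with hw
  have hwre : ∀ i, (w i).re = r i 0 := fun i => rfl
  have hwim : ∀ i, (w i).im = r i 1 := fun i => rfl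
  -- basis elements
  have hb0 : (⟨a 0, mem 0⟩ : Pl) = b 0 := by
    apply Subtype.ext
    rw [hb, Module.Basis.span_apply]
    rfl
  have hb1 : (⟨a 1, mem 1⟩ : Pl) = b 1 := by
    apply Subtype.ext
    rw [hb, Module.Basis.span_apply]
    rfl
  have hr0 : r 0 = ![1, 0] := by
    funext j
    rw [hr]
    simp only [hb0, Module.Basis.repr_self]
    fin_cases j <;> simp
  have hr1 : r 1 = ![0, 1] := by
    funext j
    rw [hr]
    simp only [hb1, Module.Basis.repr_self]
    fin_cases j <;> simp
  -- recurrence on r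
  have hrrec : ∀ i, ∃ c₁ c₂ : ℝ, c₁ < 0 ∧
      (∀ j, r (i+2) j = c₁ * r i j + c₂ * r (i+1) j) := by
    intro i
    obtain ⟨c₁, c₂, hc₁, heq⟩ := hrec i
    refine ⟨c₁, c₂, hc₁, ?_⟩
    intro j
    have hsub : (⟨a (i+2), mem (i+2)⟩ : Pl)
        = c₁ • (⟨a i, mem i⟩ : Pl) + c₂ • (⟨a (i+1), mem (i+1)⟩ : Pl) := by
      apply Subtype.ext
      simpa using heq
    rw [hr]
    simp only [hsub, map_add, map_smul, Finsupp.coe_add, Finsupp.coe_smul, Pi.add_apply,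
      Pi.smul_apply, smul_eq_mul]
  -- cross product positivity
  set X : ℕ → ℝ := fun i => r i 0 * r (i+1) 1 - r i 1 * r (i+1) 0 with hX
  have hXpos : ∀ i, 0 < X i := by
    intro i
    induction i with
    | zero => simp [hX, hr0, hr1]
    | succ i ih =>
      obtain ⟨c₁, c₂, hc₁, hrec'⟩ := hrrec i
      have : X (i+1) = -c₁ * X i := by
        rw [hX]
        simp only [hrec' 0, hrec' 1]
        ring
      rw [this]
      exact mul_pos (by linarith) ih
  have hwne : ∀ i, w i ≠ 0 := by
    intro i h
    have h0 : r i 0 = 0 := by rw [← hwre i, h]; rfl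
    have h1 : r i 1 = 0 := by rw [← hwim i, h]; rfl
    have := hXpos i
    rw [hX] at this
    simp only [h0, h1] at this
    linarith
  refine ⟨w, ?_, hwne, ?_, ?_⟩
  · intro i
    rw [Complex.div_im]
    have hnsq : 0 < Complex.normSq (w i) := Complex.normSq_pos.2 (hwne i)
    have : (w (i+1)).im * (w i).re - (w (i+1)).re * (w i).im = X i := by
      rw [hwre, hwim, hwre, hwim, hX]; ring
    have h2 : (w (i + 1)).im * (w i).re / Complex.normSq (w i)
        - (w (i + 1)).re * (w i).im / Complex.normSq (w i)
        = X i / Complex.normSq (w i) := by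
      field_simp
      linarith [this]
    rw [h2]
    exact div_pos (hXpos i) hnsq
  · intro i j h
    have : (⟨a i, mem i⟩ : Pl) = ⟨a j, mem j⟩ := Subtype.ext h
    rw [hw]
    simp only [hr, this]
  · intro i ρ
    have hsum := b.sum_repr ⟨a i, mem i⟩
    rw [Fin.sum_univ_two] at hsum
    have hval : a i = r i 0 • a 0 + r i 1 • a 1 := by
      have := congrArg (Subtype.val) hsum
      simp only [Submodule.coe_add, Submodule.coe_smul] at this
      rw [← hb0, ← hb1] at this
      exact this.symm
    rw [hwre, hwim]
    conv_lhs => rw [hval]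
    rw [map_add, map_smul, map_smul]
    simp [smul_eq_mul]

lemma countInvariant {n : ℕ} (a : ℕ → (Fin n → ℝ)) (m : ℕ)
    (hli : LinearIndependent ℝ ![a 0, a 1])
    (hrec : ∀ i, ∃ c₁ c₂ : ℝ, c₁ < 0 ∧ a (i+2) = c₁ • a i + c₂ • a (i+1))
    (hper : a m = a 0)
    (ξ ξ' : (Fin n → ℝ) →ₗ[ℝ] ℝ)
    (hξ : ∀ i, ξ (a i) ≠ 0) (hξ' : ∀ i, ξ' (a i) ≠ 0) :
    ((Finset.range m).filter fun i => ξ (a i) < 0 ∧ 0 < ξ (a (i+1))).card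
      = ((Finset.range m).filter fun i => ξ' (a i) < 0 ∧ 0 < ξ' (a (i+1))).card := by
  obtain ⟨w, hIm, hne, hinv, hdec⟩ := seqPlane a hli hrec
  have hwper : w m = w 0 := hinv m 0 hper
  have key : ∀ ρ : (Fin n → ℝ) →ₗ[ℝ] ℝ, (∀ i, ρ (a i) ≠ 0) →
      2 * Real.pi * (((Finset.range m).filter
        fun i => ρ (a i) < 0 ∧ 0 < ρ (a (i+1))).card : ℝ)
        = ∑ i ∈ Finset.range m, ((w (i+1)) / (w i)).arg := by
    intro ρ hρ
    set ζ : ℂ := Complex.mk (ρ (a 0)) (-(ρ (a 1))) with hζ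
    set u : ℕ → ℂ := fun i => ζ * w i with hu
    have hure : ∀ i, (u i).re = ρ (a i) := by
      intro i
      rw [hu]
      simp only [Complex.mul_re]
      rw [hdec i ρ]
      show ζ.re * (w i).re - ζ.im * (w i).im = _
      rw [hζ]
      show (ρ (a 0)) * (w i).re - (-(ρ (a 1))) * (w i).im = _
      ring
    have hζne : ζ ≠ 0 := by
      intro h
      apply hρ 0
      rw [← hure 0, hu]
      simp only [h, zero_mul]
      rfl
    have hratio : ∀ i, (u (i+1)) / (u i) = (w (i+1)) / (w i) := by
      intro i
      rw [hu]
      exact mul_div_mul_left _ _ hζne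
    have h1 := twoPiCount m u (fun i _ => by rw [hure i]; exact hρ i)
      (fun i _ => by rw [hratio i]; exact hIm i) (by rw [hu]; simp only [hwper])
    rw [Finset.filter_congr (fun i _ => by rw [hure i, hure (i+1)])] at h1
    rw [h1]
    exact Finset.sum_congr rfl (fun i _ => by rw [hratio i])
  have hπ := Real.pi_pos
  have := (key ξ hξ).trans (key ξ' hξ').symm
  have h2 : (((Finset.range m).filter fun i => ξ (a i) < 0 ∧ 0 < ξ (a (i+1))).card : ℝ)
      = (((Finset.range m).filter fun i => ξ' (a i) < 0 ∧ 0 < ξ' (a (i+1))).card : ℝ) := by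
    exact mul_left_cancel₀ (by positivity : (2 * Real.pi) ≠ 0) this
  exact_mod_cast h2

end AuxAnalytic

section AuxGraph

variable {G : SimpleGraph V}

/-- congruence for axial functions along equal endpoints -/
lemma alphaCongr {W : Type v} [AddCommGroup W] [Module ℝ W] (α : AxialFn G W)
    {p q p' q' : V} (hp : p = p') (hq : q = q') (h : G.Adj p q) (h' : G.Adj p' q') :
    α h = α h' := by subst hp; subst hq; rfl

lemma alphaCoe {W : Type v} [AddCommGroup W] [Module ℝ W] (α : AxialFn G W)
    {p z : V} (e : ↥(G.neighborSet p)) (hc : (↑e : V) = z) (hz : G.Adj p z) :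
    α (nadj e) = α hz := by
  obtain ⟨v, hv⟩ := e
  simp only at hc
  subst hc
  rfl

open scoped Classical in
/-- the vertex after the dart `(a, p)` in a subgraph -/
noncomputable def nxtV (H : G.Subgraph) (a p : V) : V :=
  if h : ∃ b, H.Adj p b ∧ b ≠ a then h.choose else a

/-- the cyclic walk through a 2-valent subgraph -/
noncomputable def cyc (H : G.Subgraph) (p₀ p₁ : V) : ℕ → V
  | 0 => p₀
  | 1 => p₁
  | n+2 => nxtV H (cyc H p₀ p₁ n) (cyc H p₀ p₁ (n+1))

lemma cyc_succ_succ (H : G.Subgraph) (p₀ p₁ : V) (n : ℕ) :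
    cyc H p₀ p₁ (n+2) = nxtV H (cyc H p₀ p₁ n) (cyc H p₀ p₁ (n+1)) := by
  simp [cyc]

lemma pair_other {H : G.Subgraph} (h2 : ∀ p ∈ H.verts, (H.neighborSet p).ncard = 2)
    {p a : V} (ha : H.Adj p a) :
    ∃ b, (H.Adj p b ∧ b ≠ a) ∧ ∀ c, H.Adj p c → c ≠ a → c = b := by
  obtain ⟨u, v, huv, hset⟩ := Set.ncard_eq_two.1 (h2 p ha.fst_mem)
  have hmem : ∀ c, H.Adj p c ↔ c = u ∨ c = v := by
    intro c
    constructor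
    · intro hc
      have : c ∈ H.neighborSet p := hc
      rw [hset] at this
      exact this
    · intro hc
      have : c ∈ ({u, v} : Set V) := hc
      rw [← hset] at this
      exact this
  rcases (hmem a).1 ha with h | h
  · refine ⟨v, ⟨(hmem v).2 (Or.inr rfl), by rw [h]; exact (Ne.symm huv)⟩, ?_⟩
    intro c hc hca
    rcases (hmem c).1 hc with h' | h'
    · exact absurd (h'.trans h.symm) hca
    · exact h'
  · refine ⟨u, ⟨(hmem u).2 (Or.inl rfl), by rw [h]; exact huv⟩, ?_⟩
    intro c hc hca
    rcases (hmem c).1 hc with h' | h'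
    · exact h'
    · exact absurd (h'.trans h.symm) hca

lemma nxtV_spec {H : G.Subgraph} (h2 : ∀ p ∈ H.verts, (H.neighborSet p).ncard = 2)
    {p a : V} (ha : H.Adj p a) :
    H.Adj p (nxtV H a p) ∧ nxtV H a p ≠ a := by
  obtain ⟨b, hb, _⟩ := pair_other h2 ha
  have hex : ∃ b, H.Adj p b ∧ b ≠ a := ⟨b, hb⟩
  have : nxtV H a p = hex.choose := by
    rw [nxtV]
    rw [dif_pos hex]
  rw [this]
  exact hex.choose_spec

lemma nxtV_eq {H : G.Subgraph} (h2 : ∀ p ∈ H.verts, (H.neighborSet p).ncard = 2)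
    {p a c : V} (ha : H.Adj p a) (hc : H.Adj p c) (hca : c ≠ a) :
    c = nxtV H a p := by
  obtain ⟨b, hb, huniq⟩ := pair_other h2 ha
  have h1 := huniq c hc hca
  have h2' := huniq _ (nxtV_spec h2 ha).1 (nxtV_spec h2 ha).2
  rw [h1, h2']

lemma nbr_pair {H : G.Subgraph} (h2 : ∀ p ∈ H.verts, (H.neighborSet p).ncard = 2)
    {p a b : V} (hpa : H.Adj p a) (hpb : H.Adj p b) (hab : a ≠ b) :
    H.neighborSet p = {a, b} := by
  refine (Set.eq_of_subset_of_ncard_le ?_ ?_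
    (Set.finite_of_ncard_ne_zero (by rw [h2 p hpa.fst_mem]; norm_num))).symm
  · intro c hc
    rcases hc with h | h
    · rw [h]; exact hpa
    · rw [Set.mem_singleton_iff] at h
      rw [h]; exact hpb
  · rw [h2 p hpa.fst_mem, Set.ncard_pair hab]

lemma cycle_structure [Fintype V] (H : G.Subgraph)
    (h2 : ∀ p ∈ H.verts, (H.neighborSet p).ncard = 2)
    (hconn : H.Connected) :
    ∃ (m : ℕ) (x : ℕ → V), 3 ≤ m ∧ (∀ i, H.Adj (x i) (x (i+1))) ∧
      (∀ i, x (i + m) = x i) ∧ (∀ i, x (i+2) ≠ x i) ∧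
      (∀ i j, i < m → j < m → x i = x j → i = j) ∧
      (∀ p, p ∈ H.verts ↔ ∃ i, i < m ∧ x i = p) := by
  classical
  obtain ⟨p₀, hp₀⟩ := hconn.nonempty
  have hnbr0 : (H.neighborSet p₀).Nonempty := by
    apply Set.nonempty_of_ncard_ne_zero
    rw [h2 p₀ hp₀]
    norm_num
  obtain ⟨p₁, hp₁⟩ := hnbr0
  set x : ℕ → V := cyc H p₀ p₁ with hxdef
  have hadj : ∀ i, H.Adj (x i) (x (i+1)) := by
    intro i
    induction i with
    | zero => exact hp₁
    | succ i ih =>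
      have : x (i+2) = nxtV H (x i) (x (i+1)) := cyc_succ_succ H p₀ p₁ i
      rw [this]
      exact (nxtV_spec h2 ih.symm).1
  have hne2 : ∀ i, x (i+2) ≠ x i := by
    intro i
    have : x (i+2) = nxtV H (x i) (x (i+1)) := cyc_succ_succ H p₀ p₁ i
    rw [this]
    exact (nxtV_spec h2 (hadj i).symm).2
  set D : ℕ → V × V := fun i => (x i, x (i+1)) with hDdef
  have hfront : ∀ i j, D i = D j → D (i+1) = D (j+1) := by
    intro i j h
    have h1 : x i = x j := congrArg Prod.fst h
    have h2' : x (i+1) = x (j+1) := congrArg Prod.snd h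
    have ei : x (i+2) = nxtV H (x i) (x (i+1)) := cyc_succ_succ H p₀ p₁ i
    have ej : x (j+2) = nxtV H (x j) (x (j+1)) := cyc_succ_succ H p₀ p₁ j
    have h3 : x (i+2) = x (j+2) := by rw [ei, ej, h1, h2']
    show (x (i+1), x (i+2)) = (x (j+1), x (j+2))
    rw [h2', h3]
  have hback : ∀ i j, D (i+1) = D (j+1) → D i = D j := by
    intro i j h
    have h1 : x (i+1) = x (j+1) := congrArg Prod.fst h
    have h2' : x (i+2) = x (j+2) := congrArg Prod.snd h
    have hi : x i = nxtV H (x (i+2)) (x (i+1)) :=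
      nxtV_eq h2 (hadj (i+1)) (hadj i).symm (Ne.symm (hne2 i))
    have hj : x j = nxtV H (x (j+2)) (x (j+1)) :=
      nxtV_eq h2 (hadj (j+1)) (hadj j).symm (Ne.symm (hne2 j))
    have h3 : x i = x j := by rw [hi, hj, h1, h2']
    show (x i, x (i+1)) = (x j, x (j+1))
    rw [h1, h3]
  have hex : ∃ k, 0 < k ∧ ∃ i, D (i+k) = D i := by
    obtain ⟨i, j, hij, hDij⟩ := Finite.exists_ne_map_eq_of_infinite D
    rcases Nat.lt_or_ge i j with h | h
    · exact ⟨j - i, by omega, i, by rw [show i + (j-i) = j by omega]; exact hDij.symm⟩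
    · have h' : j < i := by omega
      exact ⟨i - j, by omega, j, by rw [show j + (i-j) = i by omega]; exact hDij⟩
  set m := Nat.find hex with hmdef
  obtain ⟨hm0, i₀, hDi₀⟩ := Nat.find_spec hex
  have hmin : ∀ k, 0 < k → k < m → ∀ i, D (i+k) ≠ D i := by
    intro k hk0 hkm i heq
    exact Nat.find_min hex hkm ⟨hk0, i, heq⟩
  have hDm : D m = D 0 := by
    clear hmin
    induction i₀ with
    | zero => simpa using hDi₀
    | succ i ih =>
      apply ih
      apply hback
      rw [show i + 1 + m = (i + m) + 1 by omega] at hDi₀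
      exact hDi₀
  have hDper : ∀ i, D (i + m) = D i := by
    intro i
    induction i with
    | zero => simpa using hDm
    | succ i ih =>
      rw [show i + 1 + m = (i + m) + 1 by omega]
      exact hfront _ _ ih
  have hxper : ∀ i, x (i + m) = x i := fun i => congrArg Prod.fst (hDper i)
  have hDper_mul : ∀ i s, D (i + s * m) = D i := by
    intro i s
    induction s with
    | zero => simp
    | succ s ih =>
      rw [show i + (s+1) * m = (i + s * m) + m by ring]
      rw [hDper, ih]
  have hm1 : m ≠ 1 := by
    intro hm
    have h1 : x (0 + m) = x 0 := hxper 0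
    rw [hm] at h1
    exact (H.adj_sub (hadj 0)).ne h1.symm
  have hm2 : m ≠ 2 := by
    intro hm
    have h1 : x (0 + m) = x 0 := hxper 0
    rw [hm] at h1
    exact hne2 0 h1
  have hm3 : 3 ≤ m := by omega
  -- neighbor sets
  have Nbr : ∀ i, H.neighborSet (x i) = {x (i+1), x (i+m-1)} := by
    intro i
    have e1 : x (i+m-1+1) = x i := by
      rw [show i+m-1+1 = i+m by omega]
      exact hxper i
    have e2 : x (i+m-1+2) = x (i+1) := by
      rw [show i+m-1+2 = (i+1)+m by omega]
      exact hxper (i+1)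
    have hb : H.Adj (x i) (x (i+m-1)) := by
      have := (hadj (i+m-1)).symm
      rw [e1] at this
      exact this
    have hne : x (i+1) ≠ x (i+m-1) := by
      have := hne2 (i+m-1)
      rw [e2] at this
      exact this
    exact nbr_pair h2 (hadj i) hb hne
  -- vertex injectivity
  have hinjaux : ∀ i j, i < j → j < m → x i = x j → False := by
    intro i j hij hjm hxy
    have hpair : ({x (i+1), x (i+m-1)} : Set V) = {x (j+1), x (j+m-1)} := by
      rw [← Nbr i, ← Nbr j, hxy]
    have hj1 : x (j+1) = x (i+1) ∨ x (j+1) = x (i+m-1) := by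
      have : x (j+1) ∈ ({x (j+1), x (j+m-1)} : Set V) := Or.inl rfl
      rw [← hpair] at this
      rcases this with h | h
      · exact Or.inl h
      · exact Or.inr (Set.mem_singleton_iff.1 h)
    rcases hj1 with hcase | hcase
    · -- forward repetition
      have hDij : D (i + (j - i)) = D i := by
        rw [show i + (j-i) = j by omega]
        rw [Prod.ext_iff]
        exact ⟨hxy.symm, hcase⟩
      exact hmin (j-i) (by omega) (by omega) i hDij
    · -- reversal
      have R : ∀ k, x (j+k) = x (i+m-1+k*(m-1)+1) ∧ x (j+k+1) = x (i+m-1+k*(m-1)) := by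
        intro k
        induction k with
        | zero =>
          constructor
          · simp only [Nat.zero_mul, Nat.add_zero]
            rw [show i+m-1+1 = i+m by omega, hxper i]
            simpa using hxy.symm
          · simpa using hcase
        | succ k ih =>
          set b := i+m-1+k*(m-1) with hbdef
          obtain ⟨ih1, ih2⟩ := ih
          have hb' : i+m-1+(k+1)*(m-1) = b + (m-1) := by
            rw [hbdef]; ring
          have hbm : x (b + (m-1) + 1) = x b := by
            rw [show b + (m-1) + 1 = b + m by omega]
            exact hxper b
          constructor
          · rw [hb', hbm]
            rw [show j + (k+1) = (j+k)+1 by omega]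
            exact ih2
          · rw [hb']
            rw [show j + (k+1) + 1 = (j+k)+2 by omega]
            -- unique neighbor of x b other than x (b+1)
            have hadjb : H.Adj (x b) (x (b+1)) := hadj b
            have c1 : H.Adj (x b) (x ((j+k)+2)) := by
              have := hadj ((j+k)+1)
              rw [show (j+k)+1+1 = (j+k)+2 by omega] at this
              rw [ih2] at this
              exact this
            have c1ne : x ((j+k)+2) ≠ x (b+1) := by
              rw [← ih1]
              exact hne2 (j+k)
            have c2 : H.Adj (x b) (x (b+(m-1))) := by
              have := (hadj (b+(m-1))).symm
              rw [show b+(m-1)+1 = b+m by omega, hxper b] at this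
              exact this
            have c2ne : x (b+(m-1)) ≠ x (b+1) := by
              have := hne2 (b+(m-1))
              rw [show b+(m-1)+2 = (b+1)+m by omega, hxper (b+1)] at this
              exact fun hc => this hc.symm
            rw [nxtV_eq h2 hadjb c1 c1ne, nxtV_eq h2 hadjb c2 c2ne]
      -- collision
      set c₁ := i + m - j with hc₁def
      have hc₁pos : 0 < c₁ := by omega
      rcases Nat.even_or_odd c₁ with ⟨k, hk⟩ | ⟨k, hk⟩
      · -- c₁ = 2k : case B
        have hk0 : 0 < k := by omega
        obtain ⟨R1, R2⟩ := R k
        have hmul : k*(m-1) + k = k*m := by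
          rw [← Nat.mul_succ]
          congr 1
          omega
        have hidx : i+m-1+k*(m-1) = (j+k-1) + k*m := by omega
        have hDswap : D ((j+k-1)+1) = Prod.swap (D (j+k-1)) := by
          have hD1 : D (j+k-1+1) = (x (j+k), x (j+k+1)) := by
            rw [show j+k-1+1 = j+k by omega]
          have hD2 : D (j+k-1) = D (j+k-1+k*m) := (hDper_mul (j+k-1) k).symm
          rw [hD1, hD2]
          rw [Prod.ext_iff]
          constructor
          · show x (j+k) = x (j+k-1+k*m+1)
            rw [show j+k-1+k*m+1 = i+m-1+k*(m-1)+1 by omega]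
            exact R1
          · show x (j+k+1) = x (j+k-1+k*m)
            rw [show j+k-1+k*m = i+m-1+k*(m-1) by omega]
            exact R2
        have : x (j+k-1+2) = x (j+k-1) := by
          have h1 := congrArg Prod.snd hDswap
          simp only [Prod.snd_swap] at h1
          rw [show j+k-1+2 = (j+k-1+1)+1 by omega]
          exact h1
        exact hne2 (j+k-1) this
      · -- c₁ = 2k+1 : case A
        obtain ⟨R1, R2⟩ := R k
        have hmul : k*(m-1) + k = k*m := by
          rw [← Nat.mul_succ]
          congr 1
          omega
        have hidx : i+m-1+k*(m-1) = (j+k) + k*m := by omega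
        have : x (j+k) = x (j+k+1) := by
          have h1 : x (j+k) = x ((j+k)+k*m+1) := by
            have h1' := R1
            rw [hidx] at h1'
            exact h1'
          have h2x : x (j+k+1) = x ((j+k)+k*m) := by
            have h2'' := R2
            rw [hidx] at h2''
            exact h2''
          have e1 : x ((j+k)+k*m+1) = x ((j+k)+1) := by
            have := congrArg Prod.snd (hDper_mul (j+k) k)
            simpa using this
          have e2 : x ((j+k)+k*m) = x (j+k) := congrArg Prod.fst (hDper_mul (j+k) k)
          rw [e1] at h1
          rw [e2] at h2x
          exact h2x.symm
        exact (H.adj_sub (hadj (j+k))).ne this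
  have hinj : ∀ i j, i < m → j < m → x i = x j → i = j := by
    intro i j him hjm hxy
    rcases lt_trichotomy i j with h | h | h
    · exact absurd (hinjaux i j h hjm hxy) (fun f => f)
    · exact h
    · exact absurd (hinjaux j i h him hxy.symm) (fun f => f)
  -- coverage
  have hxper_mul : ∀ i s, x (i + s * m) = x i := fun i s => congrArg Prod.fst (hDper_mul i s)
  have hxmod : ∀ t, x (t % m) = x t := by
    intro t
    conv_rhs => rw [show t = t % m + (t / m) * m by rw [Nat.mod_add_div']]
    rw [hxper_mul]
  have hcov : ∀ p, p ∈ H.verts ↔ ∃ i, i < m ∧ x i = p := by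
    intro p
    constructor
    · intro hp
      -- closure under adjacency
      have hclosed : ∀ q, (∃ i, i < m ∧ x i = q) → ∀ r, H.Adj q r → ∃ i, i < m ∧ x i = r := by
        rintro q ⟨i, him, rfl⟩ r hr
        have : r ∈ H.neighborSet (x i) := hr
        rw [Nbr i] at this
        rcases this with h | h
        · exact ⟨(i+1) % m, Nat.mod_lt _ (by omega), by rw [hxmod]; exact h.symm⟩
        · rw [Set.mem_singleton_iff] at h
          exact ⟨(i+m-1) % m, Nat.mod_lt _ (by omega), by rw [hxmod]; exact h.symm⟩
      have hwalk : ∀ (u v : H.verts), H.coe.Walk u v → (∃ i, i < m ∧ x i = ↑u) →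
          ∃ i, i < m ∧ x i = ↑v := by
        intro u v w
        induction w with
        | nil => exact fun h => h
        | cons hadj' w ih =>
          intro hu
          apply ih
          exact hclosed _ hu _ (by exact hadj')
      have hreach := hconn.preconnected ⟨p₀, hp₀⟩ ⟨p, hp⟩
      obtain ⟨w⟩ := hreach
      exact hwalk _ _ w ⟨0, by omega, rfl⟩
    · rintro ⟨i, _, rfl⟩
      exact (hadj i).fst_mem
  exact ⟨m, x, hm3, hadj, hxper, hne2, hinj, hcov⟩

end AuxGraph

section Invariance

variable {G : SimpleGraph V}

lemma subB0_invariant {n : ℕ} [Fintype V] {θ : GraphConn G}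
    {lam : CompatSys G} {α : AxialFn G (Fin n → ℝ)}
    (hsk : IsOneSkeleton G θ lam α)
    (H : G.Subgraph) (hsub : IsSubskeleton θ H)
    (h2 : ∀ p ∈ H.verts, (H.neighborSet p).ncard = 2)
    (ξ ξ' : (Fin n → ℝ) →ₗ[ℝ] ℝ) (hξ : GenericCovec G α ξ) (hξ' : GenericCovec G α ξ') :
    subB0 α ξ H = subB0 α ξ' H := by
  classical
  obtain ⟨m, x, hm3, hadj, hxper, hne2, hinj, hcov⟩ := cycle_structure H h2 hsub.connected
  have ha : ∀ i, G.Adj (x i) (x (i+1)) := fun i => H.adj_sub (hadj i)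
  set a : ℕ → (Fin n → ℝ) := fun i => α (ha i) with hadef
  have hflip : ∀ (i : ℕ) (h' : G.Adj (x (i+1)) (x i)), α h' = - a i := by
    intro i h'
    exact hsk.2.1 (ha i)
  have Nbr : ∀ i, H.neighborSet (x (i+1)) = {x (i+2), x i} :=
    fun i => nbr_pair h2 (hadj (i+1)) ((hadj i).symm) (hne2 i)
  -- the recurrence from (gA2)
  have hrec : ∀ i, ∃ c₁ c₂ : ℝ, c₁ < 0 ∧ a (i+2) = c₁ • a i + c₂ • a (i+1) := by
    intro i
    have h' : G.Adj (x (i+1)) (x (i+2)) := ha (i+1)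
    have hecoe : ((⟨x i, (ha i).symm⟩ : ↥(G.neighborSet (x (i+1)))) : V) ≠ x (i+2) :=
      Ne.symm (hne2 i)
    obtain ⟨c, hc⟩ := hsk.1.axial.2 h' ⟨x i, (ha i).symm⟩ hecoe
    set e : ↥(G.neighborSet (x (i+1))) := ⟨x i, (ha i).symm⟩ with hedef
    have hgeo : H.Adj (x (i+2)) ↑(θ h' e) := hsub.geodesic (hadj (i+1)) e (hadj i).symm
    have hnotp : (↑(θ h' e) : V) ≠ x (i+1) := by
      intro hcontra
      have h1 : θ h' e = ⟨x (i+1), h'.symm⟩ := Subtype.ext hcontra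
      have h2' : θ h' ⟨x (i+2), h'⟩ = ⟨x (i+1), h'.symm⟩ := hsk.1.conn.1 h'
      have h3 := (θ h').injective (h1.trans h2'.symm)
      exact hecoe (congrArg Subtype.val h3)
    have hθcoe : (↑(θ h' e) : V) = x (i+3) := by
      have hθmem : (↑(θ h' e) : V) ∈ H.neighborSet (x (i+2)) := hgeo
      rw [Nbr (i+1)] at hθmem
      rcases hθmem with h | h
      · exact h
      · exact absurd (Set.mem_singleton_iff.1 h) hnotp
    have he1 : α (nadj e) = - a i := hflip i (nadj e)
    have he2 : α (nadj (θ h' e)) = a (i+2) := alphaCoe α (θ h' e) hθcoe (ha (i+2))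
    rw [he1, he2, show α h' = a (i+1) from rfl] at hc
    have hlampos : 0 < lam h' e := hsk.1.compat.1 h' e
    have hlne : lam h' e ≠ 0 := ne_of_gt hlampos
    refine ⟨-(lam h' e)⁻¹, -(c * (lam h' e)⁻¹), by
      have : 0 < (lam h' e)⁻¹ := inv_pos.2 hlampos
      linarith, ?_⟩
    funext k
    have h1 := congrFun hc k
    simp only [Pi.sub_apply, Pi.neg_apply, Pi.smul_apply, Pi.add_apply, smul_eq_mul] at h1 ⊢
    have h2' : lam h' e * a (i+2) k = - a i k - c * a (i+1) k := by linarith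
    have h3 := congrArg (fun t => (lam h' e)⁻¹ * t) h2'
    rw [← mul_assoc, inv_mul_cancel₀ hlne, one_mul] at h3
    rw [h3]
    ring
  -- linear independence of the first two axial vectors
  have hli : LinearIndependent ℝ ![a 0, a 1] := by
    have e0 : (⟨x 0, (ha 0).symm⟩ : ↥(G.neighborSet (x 1))) ≠ ⟨x 2, ha 1⟩ := by
      intro hcontra
      exact (hne2 0) (congrArg Subtype.val hcontra).symm
    have hli2 := hsk.2.2 (x 1) ⟨x 0, (ha 0).symm⟩ ⟨x 2, ha 1⟩ e0
    have hval : ![α (nadj (⟨x 0, (ha 0).symm⟩ : ↥(G.neighborSet (x 1)))),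
        α (nadj (⟨x 2, ha 1⟩ : ↥(G.neighborSet (x 1))))] = ![- a 0, a 1] := by
      funext j
      fin_cases j
      · exact hflip 0 _
      · rfl
    rw [hval] at hli2
    rw [LinearIndependent.pair_iff] at hli2 ⊢
    intro s t hst
    have h1 := hli2 (-s) t (by rw [neg_smul_neg]; exact hst)
    exact ⟨neg_eq_zero.1 h1.1, h1.2⟩
  have hper : a m = a 0 := by
    have h1 : x m = x 0 := by rw [show m = 0 + m by omega]; exact hxper 0
    have h2' : x (m+1) = x 1 := by rw [show m+1 = 1+m by omega]; exact hxper 1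
    exact alphaCongr α h1 h2' (ha m) (ha 0)
  -- the bridge between subB0 and the source count
  have bridge : ∀ (ρ : (Fin n → ℝ) →ₗ[ℝ] ℝ), GenericCovec G α ρ →
      subB0 α ρ H
        = ((Finset.range m).filter fun i => ρ (a i) < 0 ∧ 0 < ρ (a (i+1))).card := by
    intro ρ hρ
    have hval1 : ∀ (i : ℕ) (h : H.Adj (x (i+1)) (x (i+2))), ρ (α (H.adj_sub h)) = ρ (a (i+1)) :=
      fun i h => rfl
    have hval2 : ∀ (i : ℕ) (h : H.Adj (x (i+1)) (x i)), ρ (α (H.adj_sub h)) = - ρ (a i) := by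
      intro i h
      rw [hflip i (H.adj_sub h), map_neg]
    have hchar : ∀ i, (subIndex α ρ H (x (i+1)) = 0) ↔
        (ρ (a i) < 0 ∧ 0 < ρ (a (i+1))) := by
      intro i
      constructor
      · intro hidx0
        have hempty : {q : V | ∃ h : H.Adj (x (i+1)) q, ρ (α (H.adj_sub h)) < 0} = ∅ :=
          (Set.ncard_eq_zero (Set.toFinite _)).1 hidx0
        constructor
        · have hnot : x i ∉ {q : V | ∃ h : H.Adj (x (i+1)) q, ρ (α (H.adj_sub h)) < 0} := by
            rw [hempty]; exact Set.notMem_empty _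
          have hn : ¬ (ρ (α (H.adj_sub (hadj i).symm)) < 0) :=
            fun hneg => hnot ⟨(hadj i).symm, hneg⟩
          rw [hval2 i ((hadj i).symm)] at hn
          rcases lt_trichotomy (ρ (a i)) 0 with h | h | h
          · exact h
          · exact absurd h (hρ (ha i))
          · exact absurd (by linarith : -ρ (a i) < 0) hn
        · have hnot : x (i+2) ∉ {q : V | ∃ h : H.Adj (x (i+1)) q, ρ (α (H.adj_sub h)) < 0} := by
            rw [hempty]; exact Set.notMem_empty _
          have hn : ¬ (ρ (α (H.adj_sub (hadj (i+1)))) < 0) :=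
            fun hneg => hnot ⟨hadj (i+1), hneg⟩
          rw [hval1 i (hadj (i+1))] at hn
          rcases lt_trichotomy (ρ (a (i+1))) 0 with h | h | h
          · exact absurd h hn
          · exact absurd h (hρ (ha (i+1)))
          · exact h
      · rintro ⟨hneg, hpos⟩
        rw [show subIndex α ρ H (x (i+1))
            = {q : V | ∃ h : H.Adj (x (i+1)) q, ρ (α (H.adj_sub h)) < 0}.ncard from rfl]
        rw [Set.ncard_eq_zero (Set.toFinite _)]
        rw [Set.eq_empty_iff_forall_notMem]
        rintro q ⟨h, hq⟩
        have hmem : q ∈ H.neighborSet (x (i+1)) := h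
        rw [Nbr i] at hmem
        rcases hmem with hq2 | hq2
        · subst hq2
          rw [hval1 i h] at hq
          linarith
        · rw [Set.mem_singleton_iff] at hq2
          subst hq2
          rw [hval2 i h] at hq
          linarith
    set T : Finset ℕ := (Finset.range m).filter (fun i => ρ (a i) < 0 ∧ 0 < ρ (a (i+1)))
      with hT
    have hxm : x m = x 0 := by rw [show m = 0 + m by omega]; exact hxper 0
    have hinj1 : ∀ i j, i < m → j < m → x (i+1) = x (j+1) → i = j := by
      intro i j him hjm hxy
      rcases Nat.lt_or_ge (i+1) m with h1 | h1
      · rcases Nat.lt_or_ge (j+1) m with h2' | h2'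
        · have := hinj (i+1) (j+1) h1 h2' hxy
          omega
        · have hj1 : j + 1 = m := by omega
          rw [hj1, hxm] at hxy
          have := hinj (i+1) 0 h1 (by omega) hxy
          omega
      · have hi1 : i + 1 = m := by omega
        rcases Nat.lt_or_ge (j+1) m with h2' | h2'
        · rw [hi1, hxm] at hxy
          have := hinj 0 (j+1) (by omega) h2' hxy
          omega
        · omega
    have hsetEq : {p : V | p ∈ H.verts ∧ subIndex α ρ H p = 0} = (fun i => x (i+1)) '' ↑T := by
      ext p
      constructor
      · rintro ⟨hp, hidx⟩
        obtain ⟨i₀, hi₀m, hxi₀⟩ := (hcov p).1 hp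
        by_cases h0 : i₀ = 0
        · have hx1 : x ((m-1) + 1) = p := by
            rw [show (m-1)+1 = m by omega, hxm, ← h0]
            exact hxi₀
          refine ⟨m-1, ?_, hx1⟩
          rw [hT, Finset.mem_coe, Finset.mem_filter, Finset.mem_range]
          refine ⟨by omega, ?_⟩
          rw [← hchar (m-1)]
          rw [hx1]
          exact hidx
        · have hx1 : x ((i₀ - 1) + 1) = p := by
            rw [show (i₀-1)+1 = i₀ by omega]
            exact hxi₀
          refine ⟨i₀ - 1, ?_, hx1⟩
          rw [hT, Finset.mem_coe, Finset.mem_filter, Finset.mem_range]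
          refine ⟨by omega, ?_⟩
          rw [← hchar (i₀-1)]
          rw [hx1]
          exact hidx
      · rintro ⟨i, hiT, rfl⟩
        rw [hT, Finset.mem_coe, Finset.mem_filter, Finset.mem_range] at hiT
        exact ⟨(hadj i).snd_mem, (hchar i).2 hiT.2⟩
    have hinjOn : Set.InjOn (fun i => x (i+1)) ↑T := by
      intro i hi j hj hxy
      rw [hT, Finset.mem_coe, Finset.mem_filter, Finset.mem_range] at hi hj
      exact hinj1 i j hi.1 hj.1 hxy
    rw [show subB0 α ρ H = {p : V | p ∈ H.verts ∧ subIndex α ρ H p = 0}.ncard from rfl]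
    rw [hsetEq, Set.ncard_image_of_injOn hinjOn, Set.ncard_coe_finset]
  rw [bridge ξ hξ, bridge ξ' hξ']
  exact countInvariant a m hli hrec hper ξ ξ' (fun i => hξ (ha i)) (fun i => hξ' (ha i))

end Invariance

/-- A lift of a reducible 1-skeleton is reducible, with the same 2-faces. -/
theorem lift_of_reducible_is_reducible
    {V : Type u} [Fintype V] {n N d : ℕ}
    (G : SimpleGraph V) (θ : GraphConn G) (lam : CompatSys G)
    (α : AxialFn G (Fin n → ℝ))
    (hsk : IsOneSkeleton G θ lam α) (hd : Valency G d)
    (hred : ReducibleSkel G θ α)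
    (A : AxialFn G (Fin N → ℝ)) (hA : IsGenAxial G θ lam A) (hAeff : EffectiveAxial G A)
    (hnN : n < N) (hNd : N ≤ d)
    (L : (Fin N → ℝ) →ₗ[ℝ] (Fin n → ℝ)) (hL : Function.Surjective L)
    (hαA : ∀ ⦃p q : V⦄ (h : G.Adj p q), α h = L (A h)) :
    ∀ ξ : (Fin n → ℝ) →ₗ[ℝ] ℝ, PolarizingCovec G α ξ →
      GenericCovec G A (ξ.comp L) ∧ PolarizingCovec G A (ξ.comp L) ∧
      (∀ H : G.Subgraph, IsTwoFace θ A (ξ.comp L) H ↔ IsTwoFace θ α ξ H) ∧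
      EnoughTwoFaces G θ A (ξ.comp L) := by
  intro ξ hpol
  have hΞα : ∀ ⦃p q : V⦄ (h : G.Adj p q), (ξ.comp L) (A h) = ξ (α h) := by
    intro p q h
    rw [hαA h]
    rfl
  have hgenA : GenericCovec G A (ξ.comp L) := by
    intro p q h
    rw [hΞα h]
    exact hpol.1 h
  have hdir : dirRel G A (ξ.comp L) = dirRel G α ξ := by
    funext p q
    rw [eq_iff_iff]
    exact exists_congr fun h => by rw [hΞα h]
  have hpolA : PolarizingCovec G A (ξ.comp L) := ⟨hgenA, by rw [hdir]; exact hpol.2⟩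
  have hsubIdx : ∀ (H : G.Subgraph) (p : V),
      subIndex A (ξ.comp L) H p = subIndex α ξ H p := by
    intro H p
    have hset : {q | ∃ h : H.Adj p q, (ξ.comp L) (A (H.adj_sub h)) < 0}
        = {q | ∃ h : H.Adj p q, ξ (α (H.adj_sub h)) < 0} := by
      ext q
      simp only [Set.mem_setOf_eq]
      exact exists_congr fun h => by rw [hΞα (H.adj_sub h)]
    show {q | ∃ h : H.Adj p q, (ξ.comp L) (A (H.adj_sub h)) < 0}.ncard = _
    rw [hset]
    rfl
  have hsubB0 : ∀ H : G.Subgraph, subB0 A (ξ.comp L) H = subB0 α ξ H := by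
    intro H
    have hset : {p | p ∈ H.verts ∧ subIndex A (ξ.comp L) H p = 0}
        = {p | p ∈ H.verts ∧ subIndex α ξ H p = 0} := by
      ext p
      simp only [Set.mem_setOf_eq]
      rw [hsubIdx H p]
    show {p | p ∈ H.verts ∧ subIndex A (ξ.comp L) H p = 0}.ncard = _
    rw [hset]
    rfl
  have hTF : ∀ H : G.Subgraph, IsTwoFace θ A (ξ.comp L) H ↔ IsTwoFace θ α ξ H := by
    intro H
    unfold IsTwoFace
    rw [hsubB0 H]
  obtain ⟨ξ₀, hpol₀, hEn₀⟩ := hred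
  have hTF0 : ∀ H : G.Subgraph, IsTwoFace θ α ξ H ↔ IsTwoFace θ α ξ₀ H := by
    intro H
    constructor
    · rintro ⟨hs, hv, hb⟩
      exact ⟨hs, hv, (subB0_invariant hsk H hs hv ξ₀ ξ hpol₀.1 hpol.1).trans hb⟩
    · rintro ⟨hs, hv, hb⟩
      exact ⟨hs, hv, (subB0_invariant hsk H hs hv ξ ξ₀ hpol.1 hpol₀.1).trans hb⟩
  have hEnough : EnoughTwoFaces G θ A (ξ.comp L) := by
    intro p e e' hne
    obtain ⟨H₀, ⟨hH₀, he, he'⟩, huniq⟩ := hEn₀ p e e' hne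
    refine ⟨H₀, ⟨(hTF H₀).2 ((hTF0 H₀).2 hH₀), he, he'⟩, ?_⟩
    intro H hH
    exact huniq H ⟨(hTF0 H).1 ((hTF H).1 hH.1), hH.2.1, hH.2.2⟩
  exact ⟨hgenA, hpolA, hTF, hEnough⟩
end
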